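/- arXiv:2011.06743 — 2 statements merged into one kernel-verified Lean document; each statement's English description precedes it below -/
import Mathlib

section
/- Let u = (u₁,u₂) be a global C^∞ solution of the system with compactly supported C^∞ data, and suppose ‖u₁(0)‖_E ≠ ‖u₂(0)‖_E. Then it is not the case that both ‖u₁(t)‖_E → 0 and ‖u₂(t)‖_E → 0 as t → +∞; i.e., at least one of the two energies does not decay to zero. -/
open Real MeasureTheory Filter Topology

noncomputable section

/-- Partial derivative in `t`. -/
def pt (u : ℝ → ℝ → ℝ → ℝ) : ℝ → ℝ → ℝ → ℝ :=
  fun t x1 x2 => deriv (fun s => u s x1 x2) t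

/-- Partial derivative in `x₁`. -/
def p1 (u : ℝ → ℝ → ℝ → ℝ) : ℝ → ℝ → ℝ → ℝ :=
  fun t x1 x2 => deriv (fun y => u t y x2) x1

/-- Partial derivative in `x₂`. -/
def p2 (u : ℝ → ℝ → ℝ → ℝ) : ℝ → ℝ → ℝ → ℝ :=
  fun t x1 x2 => deriv (fun y => u t x1 y) x2

/-- The d'Alembertian `□ = ∂ₜ² − ∂₁² − ∂₂²`. -/
def dAlembert (u : ℝ → ℝ → ℝ → ℝ) : ℝ → ℝ → ℝ → ℝ :=
  fun t x1 x2 => pt (pt u) t x1 x2 - p1 (p1 u) t x1 x2 - p2 (p2 u) t x1 x2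

/-- `u : ℝ×ℝ² → ℝ` (curried) is C^∞. -/
def Smooth3 (u : ℝ → ℝ → ℝ → ℝ) : Prop :=
  ContDiff ℝ (⊤ : ℕ∞) (fun p : ℝ × ℝ × ℝ => u p.1 p.2.1 p.2.2)

/-- Compactly supported C^∞ function on ℝ². -/
def SmoothCompact2 (f : ℝ → ℝ → ℝ) : Prop :=
  ContDiff ℝ (⊤ : ℕ∞) (fun p : ℝ × ℝ => f p.1 p.2) ∧
    HasCompactSupport (fun p : ℝ × ℝ => f p.1 p.2)

/-- Global C^∞ solution of the Cauchy problem
`□u₁ = −(∂ₜu₂)²∂ₜu₁`, `□u₂ = −(∂ₜu₁)²∂ₜu₂` with data `(εf_j, εg_j)`. -/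
structure IsSolution (ε : ℝ) (f1 f2 g1 g2 : ℝ → ℝ → ℝ)
    (u1 u2 : ℝ → ℝ → ℝ → ℝ) : Prop where
  smooth1 : Smooth3 u1
  smooth2 : Smooth3 u2
  pde1 : ∀ t x1 x2 : ℝ, 0 < t →
    dAlembert u1 t x1 x2 = -(pt u2 t x1 x2) ^ 2 * pt u1 t x1 x2
  pde2 : ∀ t x1 x2 : ℝ, 0 < t →
    dAlembert u2 t x1 x2 = -(pt u1 t x1 x2) ^ 2 * pt u2 t x1 x2
  init1 : ∀ x1 x2 : ℝ, u1 0 x1 x2 = ε * f1 x1 x2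
  init2 : ∀ x1 x2 : ℝ, u2 0 x1 x2 = ε * f2 x1 x2
  initd1 : ∀ x1 x2 : ℝ, pt u1 0 x1 x2 = ε * g1 x1 x2
  initd2 : ∀ x1 x2 : ℝ, pt u2 0 x1 x2 = ε * g2 x1 x2

/-- `‖u(t)‖_E²  = ½∫ ((∂ₜu)² + (∂₁u)² + (∂₂u)²) dx`. -/
def energySq (u : ℝ → ℝ → ℝ → ℝ) (t : ℝ) : ℝ :=
  (1 / 2) * ∫ x : ℝ × ℝ,
    ((pt u t x.1 x.2) ^ 2 + (p1 u t x.1 x.2) ^ 2 + (p2 u t x.1 x.2) ^ 2)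

/-- The energy norm `‖u(t)‖_E`. -/
def energyNorm (u : ℝ → ℝ → ℝ → ℝ) (t : ℝ) : ℝ :=
  Real.sqrt (energySq u t)

/-- `|x|` in coordinates. -/
def radius (x1 x2 : ℝ) : ℝ := Real.sqrt (x1 ^ 2 + x2 ^ 2)

/-- The Japanese bracket `⟨z⟩ = (1+z²)^{1/2}`. -/
def jb (z : ℝ) : ℝ := Real.sqrt (1 + z ^ 2)

/-- `U(t,x) = D(|x|^{1/2}u(t,x))` where `D = ½(∂_r − ∂ₜ)`. -/
def Uop (u : ℝ → ℝ → ℝ → ℝ) : ℝ → ℝ → ℝ → ℝ :=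
  fun t x1 x2 =>
    (1 / 2) * ((x1 / radius x1 x2) *
        p1 (fun s y1 y2 => radius y1 y2 ^ ((1 : ℝ) / 2) * u s y1 y2) t x1 x2
      + (x2 / radius x1 x2) *
        p2 (fun s y1 y2 => radius y1 y2 ^ ((1 : ℝ) / 2) * u s y1 y2) t x1 x2
      - pt (fun s y1 y2 => radius y1 y2 ^ ((1 : ℝ) / 2) * u s y1 y2) t x1 x2)

/-- `V(t;σ,ω) = U(t,(t+σ)ω)`. -/
def Vop (u : ℝ → ℝ → ℝ → ℝ) (t σ ω1 ω2 : ℝ) : ℝ :=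
  Uop u t ((t + σ) * ω1) ((t + σ) * ω2)

/-- The rotation vector field `Ω = x₁∂₂ − x₂∂₁`. -/
def rot (u : ℝ → ℝ → ℝ → ℝ) : ℝ → ℝ → ℝ → ℝ :=
  fun t x1 x2 => x1 * p2 u t x1 x2 - x2 * p1 u t x1 x2

/-- `H` for component `a` (the other component being `b`):
`H_a = ½(|x|^{1/2}(∂ₜu_b)²(∂ₜu_a) + t⁻¹U_b²U_a) − (8|x|^{3/2})⁻¹(4Ω²+1)u_a`. -/
def Hfun (ua ub : ℝ → ℝ → ℝ → ℝ) (t x1 x2 : ℝ) : ℝ :=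
  (1 / 2) * (radius x1 x2 ^ ((1 : ℝ) / 2) * (pt ub t x1 x2) ^ 2 * pt ua t x1 x2
      + (1 / t) * (Uop ub t x1 x2) ^ 2 * Uop ua t x1 x2)
    - (1 / (8 * radius x1 x2 ^ ((3 : ℝ) / 2))) *
        (4 * rot (rot ua) t x1 x2 + ua t x1 x2)

/-- `K_a(t;σ,ω) = H_a(t,(t+σ)ω)`. -/
def Kfun (ua ub : ℝ → ℝ → ℝ → ℝ) (t σ ω1 ω2 : ℝ) : ℝ :=
  Hfun ua ub t ((t + σ) * ω1) ((t + σ) * ω2)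

/-- `ρ = V₁K₁ − V₂K₂`. -/
def rhoFun (u1 u2 : ℝ → ℝ → ℝ → ℝ) (t σ ω1 ω2 : ℝ) : ℝ :=
  Vop u1 t σ ω1 ω2 * Kfun u1 u2 t σ ω1 ω2 -
    Vop u2 t σ ω1 ω2 * Kfun u2 u1 t σ ω1 ω2

/-- The Radon transform: line integral of `φ` over `{y : y·ω = s}`. -/
def Rline (φ : ℝ → ℝ → ℝ) (s ω1 ω2 : ℝ) : ℝ :=
  ∫ τ : ℝ, φ (s * ω1 - τ * ω2) (s * ω2 + τ * ω1)

/-- `R₂[φ](σ,ω) = (2√2π)⁻¹ ∫_σ^∞ R[φ](s,ω)(s−σ)^{−1/2} ds`. -/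
def R2 (φ : ℝ → ℝ → ℝ) (σ ω1 ω2 : ℝ) : ℝ :=
  (1 / (2 * Real.sqrt 2 * Real.pi)) *
    ∫ s in Set.Ioi σ, Rline φ s ω1 ω2 / Real.sqrt (s - σ)

/-- The Friedlander radiation field `F₀[φ,ψ] = −∂_σR₂[φ] + R₂[ψ]`. -/
def F0 (φ ψ : ℝ → ℝ → ℝ) (σ ω1 ω2 : ℝ) : ℝ :=
  -deriv (fun σ' => R2 φ σ' ω1 ω2) σ + R2 ψ σ ω1 ω2

/-- `∂_σF₀[φ,ψ]`. -/
def dF0 (φ ψ : ℝ → ℝ → ℝ) (σ ω1 ω2 : ℝ) : ℝ :=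
  deriv (fun σ' => F0 φ ψ σ' ω1 ω2) σ

/-- The vector fields `Γ = (S, L₁, L₂, Ω, ∂ₜ, ∂₁, ∂₂)`. -/
def Gam (i : Fin 7) (u : ℝ → ℝ → ℝ → ℝ) : ℝ → ℝ → ℝ → ℝ :=
  match i with
  | 0 => fun t x1 x2 => t * pt u t x1 x2 + x1 * p1 u t x1 x2 + x2 * p2 u t x1 x2
  | 1 => fun t x1 x2 => t * p1 u t x1 x2 + x1 * pt u t x1 x2
  | 2 => fun t x1 x2 => t * p2 u t x1 x2 + x2 * pt u t x1 x2
  | 3 => rot u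
  | 4 => pt u
  | 5 => p1 u
  | 6 => p2 u

/-- `Γ^α = Γ₀^{α₀}⋯Γ₆^{α₆}`. -/
def GamMulti (α : Fin 7 → ℕ) (u : ℝ → ℝ → ℝ → ℝ) : ℝ → ℝ → ℝ → ℝ :=
  (Gam 0)^[α 0] ((Gam 1)^[α 1] ((Gam 2)^[α 2] ((Gam 3)^[α 3]
    ((Gam 4)^[α 4] ((Gam 5)^[α 5] ((Gam 6)^[α 6] u))))))

/-- Pointwise norm `|φ(t,x)|_s = Σ_{|α|≤s}|Γ^αφ(t,x)|`, for a (finite) family of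
components, `|Γ^αφ|` being the Euclidean norm of the vector of components. -/
def ptwiseNorm (s : ℕ) (us : List (ℝ → ℝ → ℝ → ℝ)) (t x1 x2 : ℝ) : ℝ :=
  ∑ α : Fin 7 → Fin (s + 1),
    if (∑ i, (α i : ℕ)) ≤ s then
      Real.sqrt ((us.map fun u => (GamMulti (fun i => (α i : ℕ)) u t x1 x2) ^ 2).sum)
    else 0

/-- `‖φ(t)‖_s = Σ_{|α|≤s}‖Γ^αφ(t,·)‖_{L²(ℝ²)}`. -/
def sobNorm (s : ℕ) (us : List (ℝ → ℝ → ℝ → ℝ)) (t : ℝ) : ℝ :=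
  ∑ α : Fin 7 → Fin (s + 1),
    if (∑ i, (α i : ℕ)) ≤ s then
      Real.sqrt (∫ x : ℝ × ℝ,
        (us.map fun u => (GamMulti (fun i => (α i : ℕ)) u t x.1 x.2) ^ 2).sum)
    else 0

/-- The components of `∂u = (∂ₜu₁,∂₁u₁,∂₂u₁,∂ₜu₂,∂₁u₂,∂₂u₂)`. -/
def dList (u1 u2 : ℝ → ℝ → ℝ → ℝ) : List (ℝ → ℝ → ℝ → ℝ) :=
  [pt u1, p1 u1, p2 u1, pt u2, p1 u2, p2 u2]

/-- Smooth solution of the free wave equation with data `(φ0,φ1)`. -/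
def IsFreeSolution (φ0 φ1 : ℝ → ℝ → ℝ) (φ : ℝ → ℝ → ℝ → ℝ) : Prop :=
  Smooth3 φ ∧ (∀ t x1 x2 : ℝ, 0 < t → dAlembert φ t x1 x2 = 0) ∧
    (∀ x1 x2 : ℝ, φ 0 x1 x2 = φ0 x1 x2) ∧
    (∀ x1 x2 : ℝ, pt φ 0 x1 x2 = φ1 x1 x2)

/-- Mixed space-time partial `∂^α = ∂ₜ^{α₀}∂₁^{α₁}∂₂^{α₂}`. -/
def dmix (α : Fin 3 → ℕ) (u : ℝ → ℝ → ℝ → ℝ) : ℝ → ℝ → ℝ → ℝ :=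
  pt^[α 0] (p1^[α 1] (p2^[α 2] u))

namespace NB

lemma one_le_inf : (1 : WithTop ℕ∞) ≤ ((⊤ : ℕ∞) : WithTop ℕ∞) := by
  exact_mod_cast le_top

lemma add_one_le_inf : ((⊤ : ℕ∞) : WithTop ℕ∞) + 1 ≤ ((⊤ : ℕ∞) : WithTop ℕ∞) := by
  exact_mod_cast le_top

/-- Uncurrying. -/
def unc (u : ℝ → ℝ → ℝ → ℝ) : ℝ × ℝ × ℝ → ℝ := fun p => u p.1 p.2.1 p.2.2

/-- Directional derivative of an uncurried function. -/
def dd (v : ℝ × ℝ × ℝ) (W : ℝ × ℝ × ℝ → ℝ) : ℝ × ℝ × ℝ → ℝ :=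
  fun p => fderiv ℝ W p v

lemma contDiff_dd (v : ℝ × ℝ × ℝ) {W : ℝ × ℝ × ℝ → ℝ}
    (hW : ContDiff ℝ (⊤ : ℕ∞) W) : ContDiff ℝ (⊤ : ℕ∞) (dd v W) := by
  have h : ContDiff ℝ (⊤ : ℕ∞) (fderiv ℝ W) := hW.fderiv_right add_one_le_inf
  exact (ContinuousLinearMap.apply ℝ ℝ v).contDiff.comp h

variable {u : ℝ → ℝ → ℝ → ℝ}

lemma diffAt3 (hu : Smooth3 u) (p : ℝ × ℝ × ℝ) :
    HasFDerivAt (unc u) (fderiv ℝ (unc u) p) p :=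
  ((hu.differentiable (by simp)) p).hasFDerivAt

lemma hasDerivAt_slot1 (hu : Smooth3 u) (t x1 x2 : ℝ) :
    HasDerivAt (fun s => u s x1 x2) (fderiv ℝ (unc u) (t, x1, x2) (1, 0, 0)) t := by
  have h1 : HasDerivAt (fun s : ℝ => ((s, x1, x2) : ℝ × ℝ × ℝ))
      ((1 : ℝ), (0 : ℝ), (0 : ℝ)) t :=
    (hasDerivAt_id t).prodMk ((hasDerivAt_const t x1).prodMk (hasDerivAt_const t x2))
  have h2 := (diffAt3 hu (t, x1, x2)).comp_hasDerivAt t h1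
  exact h2

lemma hasDerivAt_slot2 (hu : Smooth3 u) (t x1 x2 : ℝ) :
    HasDerivAt (fun y => u t y x2) (fderiv ℝ (unc u) (t, x1, x2) (0, 1, 0)) x1 := by
  have h1 : HasDerivAt (fun y : ℝ => ((t, y, x2) : ℝ × ℝ × ℝ))
      ((0 : ℝ), (1 : ℝ), (0 : ℝ)) x1 :=
    (hasDerivAt_const x1 t).prodMk ((hasDerivAt_id x1).prodMk (hasDerivAt_const x1 x2))
  have h2 := (diffAt3 hu (t, x1, x2)).comp_hasDerivAt x1 h1
  exact h2

lemma hasDerivAt_slot3 (hu : Smooth3 u) (t x1 x2 : ℝ) :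
    HasDerivAt (fun y => u t x1 y) (fderiv ℝ (unc u) (t, x1, x2) (0, 0, 1)) x2 := by
  have h1 : HasDerivAt (fun y : ℝ => ((t, x1, y) : ℝ × ℝ × ℝ))
      ((0 : ℝ), (0 : ℝ), (1 : ℝ)) x2 :=
    (hasDerivAt_const x2 t).prodMk ((hasDerivAt_const x2 x1).prodMk (hasDerivAt_id x2))
  have h2 := (diffAt3 hu (t, x1, x2)).comp_hasDerivAt x2 h1
  exact h2

lemma pt_eq (hu : Smooth3 u) (t x1 x2 : ℝ) :
    pt u t x1 x2 = fderiv ℝ (unc u) (t, x1, x2) (1, 0, 0) :=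
  (hasDerivAt_slot1 hu t x1 x2).deriv

lemma p1_eq (hu : Smooth3 u) (t x1 x2 : ℝ) :
    p1 u t x1 x2 = fderiv ℝ (unc u) (t, x1, x2) (0, 1, 0) :=
  (hasDerivAt_slot2 hu t x1 x2).deriv

lemma p2_eq (hu : Smooth3 u) (t x1 x2 : ℝ) :
    p2 u t x1 x2 = fderiv ℝ (unc u) (t, x1, x2) (0, 0, 1) :=
  (hasDerivAt_slot3 hu t x1 x2).deriv

lemma unc_pt (hu : Smooth3 u) : unc (pt u) = dd (1, 0, 0) (unc u) := by
  funext p; exact pt_eq hu p.1 p.2.1 p.2.2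

lemma unc_p1 (hu : Smooth3 u) : unc (p1 u) = dd (0, 1, 0) (unc u) := by
  funext p; exact p1_eq hu p.1 p.2.1 p.2.2

lemma unc_p2 (hu : Smooth3 u) : unc (p2 u) = dd (0, 0, 1) (unc u) := by
  funext p; exact p2_eq hu p.1 p.2.1 p.2.2

lemma smooth3_pt (hu : Smooth3 u) : Smooth3 (pt u) := by
  have : unc (pt u) = dd (1, 0, 0) (unc u) := unc_pt hu
  unfold Smooth3; rw [show (fun p : ℝ × ℝ × ℝ => pt u p.1 p.2.1 p.2.2) = unc (pt u) from rfl, this]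
  exact contDiff_dd _ hu

lemma smooth3_p1 (hu : Smooth3 u) : Smooth3 (p1 u) := by
  unfold Smooth3
  rw [show (fun p : ℝ × ℝ × ℝ => p1 u p.1 p.2.1 p.2.2) = unc (p1 u) from rfl, unc_p1 hu]
  exact contDiff_dd _ hu

lemma smooth3_p2 (hu : Smooth3 u) : Smooth3 (p2 u) := by
  unfold Smooth3
  rw [show (fun p : ℝ × ℝ × ℝ => p2 u p.1 p.2.1 p.2.2) = unc (p2 u) from rfl, unc_p2 hu]
  exact contDiff_dd _ hu

lemma smooth3_cont (hu : Smooth3 u) : Continuous (unc u) := hu.continuous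

/-- Clairaut for `dd`. -/
lemma dd_comm {W : ℝ × ℝ × ℝ → ℝ} (hW : ContDiff ℝ (⊤ : ℕ∞) W) (v w : ℝ × ℝ × ℝ) :
    dd v (dd w W) = dd w (dd v W) := by
  funext p
  have hWd : ContDiff ℝ (⊤ : ℕ∞) (fderiv ℝ W) := hW.fderiv_right add_one_le_inf
  have hder : ∀ q, HasFDerivAt W (fderiv ℝ W q) q := fun q =>
    ((hW.differentiable (by simp)) q).hasFDerivAt
  have h2 : HasFDerivAt (fderiv ℝ W) (fderiv ℝ (fderiv ℝ W) p) p :=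
    ((hWd.differentiable (by simp)) p).hasFDerivAt
  have hsymm := second_derivative_symmetric hder h2 v w
  have e1 : ∀ z : ℝ × ℝ × ℝ, dd z W = fun q => (ContinuousLinearMap.apply ℝ ℝ z) (fderiv ℝ W q) :=
    fun z => rfl
  have hv : HasFDerivAt (dd w W)
      ((ContinuousLinearMap.apply ℝ ℝ w).comp (fderiv ℝ (fderiv ℝ W) p)) p := by
    rw [e1 w]; exact (ContinuousLinearMap.apply ℝ ℝ w).hasFDerivAt.comp p h2
  have hw : HasFDerivAt (dd v W)
      ((ContinuousLinearMap.apply ℝ ℝ v).comp (fderiv ℝ (fderiv ℝ W) p)) p := by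
    rw [e1 v]; exact (ContinuousLinearMap.apply ℝ ℝ v).hasFDerivAt.comp p h2
  calc dd v (dd w W) p = fderiv ℝ (dd w W) p v := rfl
    _ = fderiv ℝ (fderiv ℝ W) p v w := by rw [hv.fderiv]; rfl
    _ = fderiv ℝ (fderiv ℝ W) p w v := hsymm
    _ = fderiv ℝ (dd v W) p w := by rw [hw.fderiv]; rfl
    _ = dd w (dd v W) p := rfl

lemma pt_p1_comm (hu : Smooth3 u) : pt (p1 u) = p1 (pt u) := by
  have h1 : unc (pt (p1 u)) = dd (1, 0, 0) (dd (0, 1, 0) (unc u)) := by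
    rw [unc_pt (smooth3_p1 hu), unc_p1 hu]
  have h2 : unc (p1 (pt u)) = dd (0, 1, 0) (dd (1, 0, 0) (unc u)) := by
    rw [unc_p1 (smooth3_pt hu), unc_pt hu]
  have h3 : unc (pt (p1 u)) = unc (p1 (pt u)) := by
    rw [h1, h2]; exact dd_comm hu _ _
  funext t x1 x2
  exact congrFun h3 (t, x1, x2)

lemma pt_p2_comm (hu : Smooth3 u) : pt (p2 u) = p2 (pt u) := by
  have h3 : unc (pt (p2 u)) = unc (p2 (pt u)) := by
    rw [unc_pt (smooth3_p2 hu), unc_p2 hu, unc_p2 (smooth3_pt hu), unc_pt hu]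
    exact dd_comm hu _ _
  funext t x1 x2
  exact congrFun h3 (t, x1, x2)

end NB
namespace NB

variable {u a b : ℝ → ℝ → ℝ → ℝ}

lemma hd1 (hu : Smooth3 u) (t x1 x2 : ℝ) :
    HasDerivAt (fun s => u s x1 x2) (pt u t x1 x2) t := by
  rw [pt_eq hu]; exact hasDerivAt_slot1 hu t x1 x2

lemma hd2 (hu : Smooth3 u) (t x1 x2 : ℝ) :
    HasDerivAt (fun y => u t y x2) (p1 u t x1 x2) x1 := by
  rw [p1_eq hu]; exact hasDerivAt_slot2 hu t x1 x2

lemma hd3 (hu : Smooth3 u) (t x1 x2 : ℝ) :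
    HasDerivAt (fun y => u t x1 y) (p2 u t x1 x2) x2 := by
  rw [p2_eq hu]; exact hasDerivAt_slot3 hu t x1 x2

lemma smooth3_const (c : ℝ) : Smooth3 (fun _ _ _ => c) := contDiff_const

lemma smooth3_add (ha : Smooth3 a) (hb : Smooth3 b) :
    Smooth3 (fun t x1 x2 => a t x1 x2 + b t x1 x2) := ha.add hb

lemma smooth3_sub (ha : Smooth3 a) (hb : Smooth3 b) :
    Smooth3 (fun t x1 x2 => a t x1 x2 - b t x1 x2) := ha.sub hb

lemma smooth3_mul (ha : Smooth3 a) (hb : Smooth3 b) :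
    Smooth3 (fun t x1 x2 => a t x1 x2 * b t x1 x2) := ha.mul hb

lemma smooth3_constmul (c : ℝ) (ha : Smooth3 a) :
    Smooth3 (fun t x1 x2 => c * a t x1 x2) := ha.const_smul c

lemma pt_mul (ha : Smooth3 a) (hb : Smooth3 b) (t x1 x2 : ℝ) :
    pt (fun t x1 x2 => a t x1 x2 * b t x1 x2) t x1 x2
      = pt a t x1 x2 * b t x1 x2 + a t x1 x2 * pt b t x1 x2 :=
  ((hd1 ha t x1 x2).mul (hd1 hb t x1 x2)).deriv

lemma p1_mul (ha : Smooth3 a) (hb : Smooth3 b) (t x1 x2 : ℝ) :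
    p1 (fun t x1 x2 => a t x1 x2 * b t x1 x2) t x1 x2
      = p1 a t x1 x2 * b t x1 x2 + a t x1 x2 * p1 b t x1 x2 :=
  ((hd2 ha t x1 x2).mul (hd2 hb t x1 x2)).deriv

lemma p2_mul (ha : Smooth3 a) (hb : Smooth3 b) (t x1 x2 : ℝ) :
    p2 (fun t x1 x2 => a t x1 x2 * b t x1 x2) t x1 x2
      = p2 a t x1 x2 * b t x1 x2 + a t x1 x2 * p2 b t x1 x2 :=
  ((hd3 ha t x1 x2).mul (hd3 hb t x1 x2)).deriv

lemma pt_add (ha : Smooth3 a) (hb : Smooth3 b) (t x1 x2 : ℝ) :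
    pt (fun t x1 x2 => a t x1 x2 + b t x1 x2) t x1 x2 = pt a t x1 x2 + pt b t x1 x2 :=
  ((hd1 ha t x1 x2).add (hd1 hb t x1 x2)).deriv

lemma p1_add (ha : Smooth3 a) (hb : Smooth3 b) (t x1 x2 : ℝ) :
    p1 (fun t x1 x2 => a t x1 x2 + b t x1 x2) t x1 x2 = p1 a t x1 x2 + p1 b t x1 x2 :=
  ((hd2 ha t x1 x2).add (hd2 hb t x1 x2)).deriv

lemma p2_add (ha : Smooth3 a) (hb : Smooth3 b) (t x1 x2 : ℝ) :
    p2 (fun t x1 x2 => a t x1 x2 + b t x1 x2) t x1 x2 = p2 a t x1 x2 + p2 b t x1 x2 :=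
  ((hd3 ha t x1 x2).add (hd3 hb t x1 x2)).deriv

lemma pt_cmul (c : ℝ) (ha : Smooth3 a) (t x1 x2 : ℝ) :
    pt (fun t x1 x2 => c * a t x1 x2) t x1 x2 = c * pt a t x1 x2 :=
  ((hd1 ha t x1 x2).const_mul c).deriv

lemma p1_cmul (c : ℝ) (ha : Smooth3 a) (t x1 x2 : ℝ) :
    p1 (fun t x1 x2 => c * a t x1 x2) t x1 x2 = c * p1 a t x1 x2 :=
  ((hd2 ha t x1 x2).const_mul c).deriv

lemma p2_cmul (c : ℝ) (ha : Smooth3 a) (t x1 x2 : ℝ) :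
    p2 (fun t x1 x2 => c * a t x1 x2) t x1 x2 = c * p2 a t x1 x2 :=
  ((hd3 ha t x1 x2).const_mul c).deriv

/-- Joint continuity with grouped space variables. -/
lemma contP (hu : Smooth3 u) :
    Continuous fun q : ℝ × (ℝ × ℝ) => u q.1 q.2.1 q.2.2 := by
  have h : Continuous fun q : ℝ × (ℝ × ℝ) => ((q.1, q.2.1, q.2.2) : ℝ × ℝ × ℝ) := by
    fun_prop
  exact hu.continuous.comp h

end NB
namespace NB
open MeasureTheory

lemma hasDerivAt_integral_cpt (F F' : ℝ → (ℝ × ℝ) → ℝ) (t₀ ε : ℝ) (hε : 0 < ε)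
    (hF : Continuous fun p : ℝ × (ℝ × ℝ) => F p.1 p.2)
    (hF' : Continuous fun p : ℝ × (ℝ × ℝ) => F' p.1 p.2)
    (K : Set (ℝ × ℝ)) (hK : IsCompact K)
    (hsupp : ∀ t ∈ Metric.ball t₀ ε, ∀ x, x ∉ K → F t x = 0)
    (hsupp' : ∀ t ∈ Metric.ball t₀ ε, ∀ x, x ∉ K → F' t x = 0)
    (hder : ∀ x, ∀ t ∈ Metric.ball t₀ ε, HasDerivAt (fun s => F s x) (F' t x) t) :
    HasDerivAt (fun t => ∫ x : ℝ × ℝ, F t x) (∫ x : ℝ × ℝ, F' t₀ x) t₀ := by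
  obtain ⟨C, hC⟩ :=
    ((isCompact_Icc (a := t₀ - ε/2) (b := t₀ + ε/2)).prod hK).exists_bound_of_continuousOn
      hF'.continuousOn
  have hballIcc : Metric.ball t₀ (ε/2) ⊆ Set.Icc (t₀ - ε/2) (t₀ + ε/2) := by
    intro t ht
    rw [Metric.mem_ball, Real.dist_eq] at ht
    constructor <;> [linarith [neg_abs_le (t - t₀)]; linarith [le_abs_self (t - t₀)]]
  have hballball : Metric.ball t₀ (ε/2) ⊆ Metric.ball t₀ ε :=
    Metric.ball_subset_ball (by linarith)
  have ht₀ : t₀ ∈ Metric.ball t₀ ε := Metric.mem_ball_self hε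
  have contFt : ∀ t, Continuous (F t) := fun t =>
    hF.comp (Continuous.prodMk_right t)
  have contF't : ∀ t, Continuous (F' t) := fun t =>
    hF'.comp (Continuous.prodMk_right t)
  refine (hasDerivAt_integral_of_dominated_loc_of_deriv_le (s := Metric.ball t₀ (ε/2)) (bound := K.indicator fun _ => C) (Metric.ball_mem_nhds t₀ (by positivity))
      (Filter.Eventually.of_forall fun t => (contFt t).aestronglyMeasurable)
      ?_ (contF't t₀).aestronglyMeasurable ?_ ?_ ?_).2
  · exact ((contFt t₀).integrable_of_hasCompactSupport
      (HasCompactSupport.intro hK (fun x hx => hsupp t₀ ht₀ x hx)))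
  · refine Filter.Eventually.of_forall fun x => fun t ht => ?_
    by_cases hx : x ∈ K
    · have := hC (t, x) ⟨hballIcc ht, hx⟩
      simpa [Set.indicator_of_mem hx] using this
    · rw [hsupp' t (hballball ht) x hx]
      simp [Set.indicator, hx]
  · exact (integrable_indicator_iff hK.measurableSet).2
      (integrableOn_const hK.measure_lt_top.ne)
  · exact Filter.Eventually.of_forall fun x t ht => hder x t (hballball ht)

lemma continuousAt_integral_cpt (F : ℝ → (ℝ × ℝ) → ℝ) (t₀ : ℝ)
    (hF : Continuous fun p : ℝ × (ℝ × ℝ) => F p.1 p.2)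
    (K : Set (ℝ × ℝ)) (hK : IsCompact K)
    (hsupp : ∀ t ∈ Set.Icc (t₀ - 1) (t₀ + 1), ∀ x, x ∉ K → F t x = 0) :
    ContinuousAt (fun t => ∫ x : ℝ × ℝ, F t x) t₀ := by
  obtain ⟨C, hC⟩ :=
    ((isCompact_Icc (a := t₀ - 1) (b := t₀ + 1)).prod hK).exists_bound_of_continuousOn
      hF.continuousOn
  have contFt : ∀ t, Continuous (F t) := fun t => hF.comp (Continuous.prodMk_right t)
  have hIcc : Set.Icc (t₀ - 1) (t₀ + 1) ∈ nhds t₀ := Icc_mem_nhds (by linarith) (by linarith)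
  refine continuousAt_of_dominated (bound := K.indicator fun _ => C)
      (Filter.Eventually.of_forall fun t => (contFt t).aestronglyMeasurable)
      ?_ ?_ ?_
  · refine Filter.Eventually.mono hIcc fun t ht => Filter.Eventually.of_forall fun x => ?_
    by_cases hx : x ∈ K
    · simpa [Set.indicator_of_mem hx] using hC (t, x) ⟨ht, hx⟩
    · rw [hsupp t ht x hx]; simp [Set.indicator, hx]
  · exact (integrable_indicator_iff hK.measurableSet).2
      (integrableOn_const hK.measure_lt_top.ne)
  · exact Filter.Eventually.of_forall fun x =>
      (hF.comp (continuous_id.prodMk continuous_const)).continuousAt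

lemma deriv_zero_of_locally_zero {g g' : ℝ → ℝ} (hg : ∀ y, HasDerivAt g (g' y) y)
    {U : Set ℝ} (hU : IsOpen U) (hzero : ∀ y ∈ U, g y = 0) : ∀ y ∈ U, g' y = 0 := by
  intro y hy
  have hev : g =ᶠ[nhds y] (fun _ => 0) :=
    Filter.eventuallyEq_of_mem (hU.mem_nhds hy) hzero
  have : HasDerivAt g 0 y := (hasDerivAt_const y (0 : ℝ)).congr_of_eventuallyEq hev
  exact (hg y).unique this

lemma integral_deriv_zero_line (g g' : ℝ → ℝ) (hg : ∀ y, HasDerivAt g (g' y) y)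
    (hg' : Continuous g') (M : ℝ) (h0 : ∀ y, M < |y| → g y = 0) :
    ∫ y : ℝ, g' y = 0 := by
  set M' : ℝ := |M| + 1 with hM'
  have hMM' : M < M' := lt_of_le_of_lt (le_abs_self M) (by simp [hM'])
  have hg'0 : ∀ y, M < |y| → g' y = 0 := by
    refine deriv_zero_of_locally_zero hg (U := {y : ℝ | M < |y|}) ?_ h0
    exact isOpen_lt continuous_const continuous_abs
  have h1 : ∫ y : ℝ, g' y = ∫ y in Set.Ioc (-M') M', g' y := by
    rw [setIntegral_eq_integral_of_forall_compl_eq_zero]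
    intro y hy
    apply hg'0
    simp only [Set.mem_Ioc, not_and_or, not_lt, not_le] at hy
    rcases hy with h | h
    · calc M < M' := hMM'
        _ ≤ -y := by linarith
        _ ≤ |y| := neg_le_abs y
    · exact lt_of_lt_of_le hMM' (le_trans h.le (le_abs_self y))
  have h2 : ∫ y in Set.Ioc (-M') M', g' y = ∫ y in (-M')..M', g' y :=
    (intervalIntegral.integral_of_le (by linarith [abs_nonneg M])).symm
  have h3 : ∫ y in (-M')..M', g' y = g M' - g (-M') := by
    apply intervalIntegral.integral_eq_sub_of_hasDerivAt (fun x _ => hg x)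
    exact hg'.intervalIntegrable _ _
  rw [h1, h2, h3, h0 M' (by rw [abs_of_pos (by linarith [abs_nonneg M])]; exact hMM'),
    h0 (-M') (by rw [abs_neg, abs_of_pos (by linarith [abs_nonneg M])]; exact hMM')]
  ring

lemma integral_partial1_zero (g d : ℝ → ℝ → ℝ)
    (hder : ∀ x1 x2 : ℝ, HasDerivAt (fun y => g y x2) (d x1 x2) x1)
    (hg : Continuous fun x : ℝ × ℝ => g x.1 x.2)
    (hd : Continuous fun x : ℝ × ℝ => d x.1 x.2)
    (M : ℝ) (hsupp : ∀ x1 x2 : ℝ, M < |x1| ∨ M < |x2| → g x1 x2 = 0) :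
    ∫ x : ℝ × ℝ, d x.1 x.2 = 0 := by
  have hd0 : ∀ x1 x2 : ℝ, M < |x1| ∨ M < |x2| → d x1 x2 = 0 := by
    intro x1 x2 h
    rcases h with h | h
    · exact deriv_zero_of_locally_zero (g := fun y => g y x2) (fun y => hder y x2)
        (U := {y : ℝ | M < |y|}) (isOpen_lt continuous_const continuous_abs)
        (fun y hy => hsupp y x2 (Or.inl hy)) x1 h
    · exact (hder x1 x2).unique (by
        have : (fun y => g y x2) = fun _ => 0 := funext fun y => hsupp y x2 (Or.inr h)
        rw [this]; exact hasDerivAt_const x1 0)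
  have hKc : IsCompact (Set.Icc (-(M+1)) (M+1) ×ˢ Set.Icc (-(M+1)) (M+1)) :=
    isCompact_Icc.prod isCompact_Icc
  have hint : Integrable (fun x : ℝ × ℝ => d x.1 x.2) := by
    apply hd.integrable_of_hasCompactSupport
    apply HasCompactSupport.intro hKc
    intro x hx
    apply hd0
    simp only [Set.mem_prod, Set.mem_Icc, not_and_or] at hx
    rcases hx with h | h <;>
      [left; right] <;>
      · rw [lt_abs]
        rcases h with h | h
        · rw [not_le] at h; right; linarith [neg_abs_le M]
        · rw [not_le] at h; left; linarith [le_abs_self M]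
  have := MeasureTheory.Measure.volume_eq_prod (α := ℝ) (β := ℝ)
  rw [show (volume : Measure (ℝ × ℝ)) = (volume : Measure ℝ).prod volume from this] at hint ⊢
  rw [MeasureTheory.integral_prod_symm _ hint]
  have : ∀ x2 : ℝ, ∫ x1 : ℝ, d x1 x2 = 0 := fun x2 =>
    integral_deriv_zero_line (fun y => g y x2) (fun y => d y x2) (fun y => hder y x2)
      (hd.comp (continuous_id.prodMk continuous_const)) M
      (fun y hy => hsupp y x2 (Or.inl hy))
  simp only [this, integral_zero]

lemma integral_partial2_zero (g d : ℝ → ℝ → ℝ)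
    (hder : ∀ x1 x2 : ℝ, HasDerivAt (fun y => g x1 y) (d x1 x2) x2)
    (hg : Continuous fun x : ℝ × ℝ => g x.1 x.2)
    (hd : Continuous fun x : ℝ × ℝ => d x.1 x.2)
    (M : ℝ) (hsupp : ∀ x1 x2 : ℝ, M < |x1| ∨ M < |x2| → g x1 x2 = 0) :
    ∫ x : ℝ × ℝ, d x.1 x.2 = 0 := by
  have h := integral_partial1_zero (fun a b => g b a) (fun a b => d b a)
    (fun x1 x2 => hder x2 x1)
    (hg.comp (continuous_snd.prodMk continuous_fst))
    (hd.comp (continuous_snd.prodMk continuous_fst))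
    M (fun x1 x2 hx => hsupp x2 x1 hx.symm)
  have hswap : ∫ x : ℝ × ℝ, d x.1 x.2 = ∫ x : ℝ × ℝ, d x.2 x.1 := by
    rw [show (volume : Measure (ℝ × ℝ)) = (volume : Measure ℝ).prod volume from
      MeasureTheory.Measure.volume_eq_prod ℝ ℝ]
    exact MeasureTheory.integral_prod_swap (fun x : ℝ × ℝ => d x.2 x.1)
  rw [hswap]
  exact h

lemma eq_zero_of_integral_zero (f : ℝ × ℝ → ℝ) (hf : Continuous f) (h0 : ∀ x, 0 ≤ f x)
    (hint : Integrable f) (hI : ∫ x, f x = 0) : ∀ x, f x = 0 := by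
  have hae : f =ᶠ[ae volume] 0 := (integral_eq_zero_iff_of_nonneg h0 hint).1 hI
  intro x₀
  by_contra hne
  have hpos : 0 < f x₀ := lt_of_le_of_ne (h0 x₀) (Ne.symm hne)
  have hU : IsOpen (f ⁻¹' Set.Ioi (f x₀ / 2)) := isOpen_Ioi.preimage hf
  have hUx : x₀ ∈ f ⁻¹' Set.Ioi (f x₀ / 2) := by simp; linarith
  have hUpos : 0 < volume (f ⁻¹' Set.Ioi (f x₀ / 2)) := hU.measure_pos volume ⟨x₀, hUx⟩
  have hsub : f ⁻¹' Set.Ioi (f x₀ / 2) ⊆ {x | f x ≠ 0} := by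
    intro x hx
    simp only [Set.mem_preimage, Set.mem_Ioi] at hx
    simp only [Set.mem_setOf_eq]
    linarith
  have : volume (f ⁻¹' Set.Ioi (f x₀ / 2)) = 0 :=
    measure_mono_null hsub hae
  exact absurd this hUpos.ne'

end NB
namespace NB
open MeasureTheory

/-! ### Smooth cutoff -/

structure Cutoff (a b : ℝ) where
  χ : ℝ → ℝ
  χ' : ℝ → ℝ
  deriv : ∀ s, HasDerivAt χ (χ' s) s
  cont : Continuous χ
  cont' : Continuous χ'
  one : ∀ s, s ≤ a → χ s = 1
  zero : ∀ s, b ≤ s → χ s = 0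
  nonneg : ∀ s, 0 ≤ χ s
  deriv_nonpos : ∀ s, χ' s ≤ 0
  deriv_zero : ∀ s, s < a ∨ b < s → χ' s = 0

lemma cutoff_exists {a b : ℝ} (hab : a < b) : Nonempty (Cutoff a b) := by
  set c : ℝ := (a + b) / 2 with hc
  have h1 : (0:ℝ) < (b - a) / 2 := by linarith
  set f : ContDiffBump c := ⟨(b - a) / 4, (b - a) / 2, by linarith, by linarith⟩ with hf
  set ψ : ℝ → ℝ := fun s => f s with hψ
  have hψc : Continuous ψ := f.continuous
  have hψ0 : ∀ s, s ≤ a ∨ b ≤ s → ψ s = 0 := by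
    intro s hs
    apply f.zero_of_le_dist
    rw [Real.dist_eq]
    show (b - a) / 2 ≤ |s - c|
    rcases hs with h | h
    · rw [abs_sub_comm, le_abs]; left; rw [hc]; linarith
    · rw [le_abs]; left; rw [hc]; linarith
  have hψnn : ∀ s, 0 ≤ ψ s := fun s => f.nonneg
  set c0 : ℝ := ∫ s, ψ s with hc0
  have hc0pos : 0 < c0 := f.integral_pos
  set Φ : ℝ → ℝ := fun s => ∫ y in s..b, ψ y with hΦ
  have hΦd : ∀ s, HasDerivAt Φ (-ψ s) s := fun s =>
    (intervalIntegral.integral_hasStrictDerivAt_left (hψc.intervalIntegrable _ _)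
      (hψc.stronglyMeasurableAtFilter _ _) hψc.continuousAt).hasDerivAt
  have hΦone : ∀ s, s ≤ a → Φ s = c0 := by
    intro s hs
    have : Φ s = ∫ y in Set.Ioc s b, ψ y :=
      intervalIntegral.integral_of_le (by linarith)
    rw [this, hc0, setIntegral_eq_integral_of_forall_compl_eq_zero]
    intro y hy
    simp only [Set.mem_Ioc, not_and_or, not_lt, not_le] at hy
    exact hψ0 y (by rcases hy with h | h; exacts [Or.inl (le_trans h hs), Or.inr h.le])
  have hΦzero : ∀ s, b ≤ s → Φ s = 0 := by
    intro s hs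
    rcases eq_or_lt_of_le hs with h | h
    · rw [hΦ]; simp only [← h]; exact intervalIntegral.integral_same
    · rw [hΦ]
      show (∫ y in s..b, ψ y) = 0
      rw [intervalIntegral.integral_of_ge (le_of_lt h)]
      rw [setIntegral_eq_zero_of_forall_eq_zero fun y hy => hψ0 y (Or.inr hy.1.le)]
      ring
  have hΦnn : ∀ s, 0 ≤ Φ s := by
    intro s
    by_cases h : s ≤ b
    · exact intervalIntegral.integral_nonneg h (fun u _ => hψnn u)
    · rw [hΦzero s (by linarith)]
  exact ⟨{
    χ := fun s => Φ s / c0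
    χ' := fun s => -ψ s / c0
    deriv := fun s => (hΦd s).div_const c0
    cont := continuous_iff_continuousAt.2 fun s => ((hΦd s).div_const c0).continuousAt

    cont' := (hψc.neg).div_const c0
    one := fun s hs => by show Φ s / c0 = 1; rw [hΦone s hs]; field_simp
    zero := fun s hs => by show Φ s / c0 = 0; rw [hΦzero s hs]; simp
    nonneg := fun s => div_nonneg (hΦnn s) hc0pos.le
    deriv_nonpos := fun s => div_nonpos_of_nonpos_of_nonneg (neg_nonpos.2 (hψnn s)) hc0pos.le
    deriv_zero := fun s hs => by
      show -ψ s / c0 = 0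
      rw [hψ0 s (by rcases hs with h | h; exacts [Or.inl h.le, Or.inr h.le])]; simp }⟩

/-! ### Smoothed radial weight -/

def rho (δ a1 a2 x1 x2 : ℝ) : ℝ := Real.sqrt (δ ^ 2 + (x1 - a1) ^ 2 + (x2 - a2) ^ 2)

variable {δ a1 a2 : ℝ}

lemma rho_arg_pos (hδ : 0 < δ) (x1 x2 : ℝ) :
    0 < δ ^ 2 + (x1 - a1) ^ 2 + (x2 - a2) ^ 2 := by positivity

lemma rho_pos (hδ : 0 < δ) (x1 x2 : ℝ) : 0 < rho δ a1 a2 x1 x2 :=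
  Real.sqrt_pos.2 (rho_arg_pos hδ x1 x2)

lemma rho_sq (hδ : 0 < δ) (x1 x2 : ℝ) :
    rho δ a1 a2 x1 x2 ^ 2 = δ ^ 2 + (x1 - a1) ^ 2 + (x2 - a2) ^ 2 :=
  Real.sq_sqrt (rho_arg_pos hδ x1 x2).le

lemma rho_cont : Continuous fun x : ℝ × ℝ => rho δ a1 a2 x.1 x.2 := by
  apply Real.continuous_sqrt.comp
  fun_prop

lemma rho_hasDerivAt_1 (hδ : 0 < δ) (x1 x2 : ℝ) :
    HasDerivAt (fun y => rho δ a1 a2 y x2) ((x1 - a1) / rho δ a1 a2 x1 x2) x1 := by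
  have harg : HasDerivAt (fun y : ℝ => δ ^ 2 + (y - a1) ^ 2 + (x2 - a2) ^ 2)
      (2 * (x1 - a1)) x1 := by
    have h : HasDerivAt (fun y : ℝ => y - a1) 1 x1 := (hasDerivAt_id x1).sub_const a1
    simpa using ((h.pow 2).const_add (δ ^ 2)).add_const ((x2 - a2) ^ 2)
  have hs := (Real.hasDerivAt_sqrt (rho_arg_pos hδ x1 x2).ne').comp x1 harg
  refine hs.congr_deriv ?_
  rw [show Real.sqrt (δ ^ 2 + (x1 - a1) ^ 2 + (x2 - a2) ^ 2) = rho δ a1 a2 x1 x2 from rfl]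
  field_simp

lemma rho_hasDerivAt_2 (hδ : 0 < δ) (x1 x2 : ℝ) :
    HasDerivAt (fun y => rho δ a1 a2 x1 y) ((x2 - a2) / rho δ a1 a2 x1 x2) x2 := by
  have harg : HasDerivAt (fun y : ℝ => δ ^ 2 + (x1 - a1) ^ 2 + (y - a2) ^ 2)
      (2 * (x2 - a2)) x2 := by
    have h : HasDerivAt (fun y : ℝ => y - a2) 1 x2 := (hasDerivAt_id x2).sub_const a2
    simpa using (h.pow 2).const_add (δ ^ 2 + (x1 - a1) ^ 2)
  have hs := (Real.hasDerivAt_sqrt (rho_arg_pos hδ x1 x2).ne').comp x2 harg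
  refine hs.congr_deriv ?_
  rw [show Real.sqrt (δ ^ 2 + (x1 - a1) ^ 2 + (x2 - a2) ^ 2) = rho δ a1 a2 x1 x2 from rfl]
  field_simp

lemma rho_grad_le (hδ : 0 < δ) (x1 x2 : ℝ) :
    ((x1 - a1) / rho δ a1 a2 x1 x2) ^ 2 + ((x2 - a2) / rho δ a1 a2 x1 x2) ^ 2 ≤ 1 := by
  have hpos := rho_pos (a1 := a1) (a2 := a2) hδ x1 x2
  have hsq := rho_sq (a1 := a1) (a2 := a2) hδ x1 x2
  rw [div_pow, div_pow, ← add_div, div_le_one (by positivity)]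
  nlinarith [sq_nonneg δ]

lemma rho_ge (hδ : 0 < δ) (x1 x2 : ℝ) :
    Real.sqrt ((x1 - a1) ^ 2 + (x2 - a2) ^ 2) ≤ rho δ a1 a2 x1 x2 :=
  Real.sqrt_le_sqrt (by nlinarith [sq_nonneg δ])

lemma rho_le (hδ : 0 < δ) (x1 x2 : ℝ) :
    rho δ a1 a2 x1 x2 ≤ δ + Real.sqrt ((x1 - a1) ^ 2 + (x2 - a2) ^ 2) := by
  have h1 : Real.sqrt ((x1 - a1) ^ 2 + (x2 - a2) ^ 2) ^ 2 = (x1 - a1) ^ 2 + (x2 - a2) ^ 2 :=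
    Real.sq_sqrt (by positivity)
  have h2 : rho δ a1 a2 x1 x2 ≤ Real.sqrt ((δ + Real.sqrt ((x1 - a1) ^ 2 + (x2 - a2) ^ 2)) ^ 2) := by
    apply Real.sqrt_le_sqrt
    nlinarith [Real.sqrt_nonneg ((x1 - a1) ^ 2 + (x2 - a2) ^ 2), hδ.le]
  rwa [Real.sqrt_sq (by positivity)] at h2

lemma rho_center (hδ : 0 < δ) : rho δ a1 a2 a1 a2 = δ := by
  simp [rho, Real.sqrt_sq hδ.le]

/-! ### Euclidean radius -/

def r2 (x1 x2 : ℝ) : ℝ := Real.sqrt (x1 ^ 2 + x2 ^ 2)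

lemma r2_nonneg (x1 x2 : ℝ) : 0 ≤ r2 x1 x2 := Real.sqrt_nonneg _

lemma r2_sq (x1 x2 : ℝ) : r2 x1 x2 ^ 2 = x1 ^ 2 + x2 ^ 2 := Real.sq_sqrt (by positivity)

lemma r2_triangle (p1 p2 q1 q2 : ℝ) : r2 (p1 + q1) (p2 + q2) ≤ r2 p1 p2 + r2 q1 q2 := by
  have hp := r2_nonneg p1 p2
  have hq := r2_nonneg q1 q2
  have hps := r2_sq p1 p2
  have hqs := r2_sq q1 q2
  have hcs : p1 * q1 + p2 * q2 ≤ r2 p1 p2 * r2 q1 q2 := by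
    nlinarith [sq_nonneg (p1 * q2 - p2 * q1), sq_nonneg (r2 p1 p2 * r2 q1 q2 - p1 * q1 - p2 * q2),
      mul_nonneg hp hq]
  have : r2 (p1 + q1) (p2 + q2) ≤ Real.sqrt ((r2 p1 p2 + r2 q1 q2) ^ 2) := by
    apply Real.sqrt_le_sqrt
    nlinarith
  rwa [Real.sqrt_sq (by positivity)] at this

end NB
namespace NB
open MeasureTheory

lemma rho_ge_abs1 {δ a1 a2 : ℝ} (hδ : 0 < δ) (x1 x2 : ℝ) :
    |x1 - a1| ≤ rho δ a1 a2 x1 x2 := by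
  rw [← Real.sqrt_sq_eq_abs]
  exact Real.sqrt_le_sqrt (by nlinarith [sq_nonneg δ, sq_nonneg (x2 - a2)])

lemma rho_ge_abs2 {δ a1 a2 : ℝ} (hδ : 0 < δ) (x1 x2 : ℝ) :
    |x2 - a2| ≤ rho δ a1 a2 x1 x2 := by
  rw [← Real.sqrt_sq_eq_abs]
  exact Real.sqrt_le_sqrt (by nlinarith [sq_nonneg δ, sq_nonneg (x1 - a1)])

section Pair

variable (u1 u2 : ℝ → ℝ → ℝ → ℝ)

/-- Energy density of a single component (no factor ½). -/
def qd (u : ℝ → ℝ → ℝ → ℝ) : ℝ → ℝ → ℝ → ℝ := fun t x1 x2 =>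
  pt u t x1 x2 * pt u t x1 x2 + p1 u t x1 x2 * p1 u t x1 x2 + p2 u t x1 x2 * p2 u t x1 x2

def fl1 (u : ℝ → ℝ → ℝ → ℝ) : ℝ → ℝ → ℝ → ℝ := fun t x1 x2 =>
  2 * (pt u t x1 x2 * p1 u t x1 x2)

def fl2 (u : ℝ → ℝ → ℝ → ℝ) : ℝ → ℝ → ℝ → ℝ := fun t x1 x2 =>
  2 * (pt u t x1 x2 * p2 u t x1 x2)

variable {u : ℝ → ℝ → ℝ → ℝ}

lemma smooth3_qd (hu : Smooth3 u) : Smooth3 (qd u) :=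
  smooth3_add (smooth3_add (smooth3_mul (smooth3_pt hu) (smooth3_pt hu))
      (smooth3_mul (smooth3_p1 hu) (smooth3_p1 hu)))
    (smooth3_mul (smooth3_p2 hu) (smooth3_p2 hu))

lemma smooth3_fl1 (hu : Smooth3 u) : Smooth3 (fl1 u) :=
  smooth3_constmul 2 (smooth3_mul (smooth3_pt hu) (smooth3_p1 hu))

lemma smooth3_fl2 (hu : Smooth3 u) : Smooth3 (fl2 u) :=
  smooth3_constmul 2 (smooth3_mul (smooth3_pt hu) (smooth3_p2 hu))

/-- The basic pointwise energy identity for one component. -/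
lemma qd_t_deriv (hu : Smooth3 u) (t x1 x2 : ℝ) :
    pt (qd u) t x1 x2 = p1 (fl1 u) t x1 x2 + p2 (fl2 u) t x1 x2
      + 2 * pt u t x1 x2 * dAlembert u t x1 x2 := by
  have e0 : pt (qd u) t x1 x2 =
      (pt (pt u) t x1 x2 * pt u t x1 x2 + pt u t x1 x2 * pt (pt u) t x1 x2)
      + (pt (p1 u) t x1 x2 * p1 u t x1 x2 + p1 u t x1 x2 * pt (p1 u) t x1 x2)
      + (pt (p2 u) t x1 x2 * p2 u t x1 x2 + p2 u t x1 x2 * pt (p2 u) t x1 x2) := by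
    rw [show qd u = fun t x1 x2 =>
        (pt u t x1 x2 * pt u t x1 x2 + p1 u t x1 x2 * p1 u t x1 x2)
          + p2 u t x1 x2 * p2 u t x1 x2 from rfl]
    rw [pt_add (smooth3_add (smooth3_mul (smooth3_pt hu) (smooth3_pt hu))
        (smooth3_mul (smooth3_p1 hu) (smooth3_p1 hu)))
      (smooth3_mul (smooth3_p2 hu) (smooth3_p2 hu)),
      pt_add (smooth3_mul (smooth3_pt hu) (smooth3_pt hu))
        (smooth3_mul (smooth3_p1 hu) (smooth3_p1 hu)),
      pt_mul (smooth3_pt hu) (smooth3_pt hu), pt_mul (smooth3_p1 hu) (smooth3_p1 hu),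
      pt_mul (smooth3_p2 hu) (smooth3_p2 hu)]
  have e1 : p1 (fl1 u) t x1 x2 =
      2 * (p1 (pt u) t x1 x2 * p1 u t x1 x2 + pt u t x1 x2 * p1 (p1 u) t x1 x2) := by
    rw [show fl1 u = fun t x1 x2 => 2 * (pt u t x1 x2 * p1 u t x1 x2) from rfl,
      p1_cmul 2 (smooth3_mul (smooth3_pt hu) (smooth3_p1 hu)),
      p1_mul (smooth3_pt hu) (smooth3_p1 hu)]
  have e2 : p2 (fl2 u) t x1 x2 =
      2 * (p2 (pt u) t x1 x2 * p2 u t x1 x2 + pt u t x1 x2 * p2 (p2 u) t x1 x2) := by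
    rw [show fl2 u = fun t x1 x2 => 2 * (pt u t x1 x2 * p2 u t x1 x2) from rfl,
      p2_cmul 2 (smooth3_mul (smooth3_pt hu) (smooth3_p2 hu)),
      p2_mul (smooth3_pt hu) (smooth3_p2 hu)]
  have c1 : pt (p1 u) t x1 x2 = p1 (pt u) t x1 x2 := by rw [pt_p1_comm hu]
  have c2 : pt (p2 u) t x1 x2 = p2 (pt u) t x1 x2 := by rw [pt_p2_comm hu]
  have hdal : dAlembert u t x1 x2
      = pt (pt u) t x1 x2 - p1 (p1 u) t x1 x2 - p2 (p2 u) t x1 x2 := rfl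
  rw [e0, e1, e2, c1, c2, hdal]
  ring

/-- Combined density with sign `σ`. -/
def densS (σ : ℝ) : ℝ → ℝ → ℝ → ℝ := fun t x1 x2 =>
  qd u1 t x1 x2 + σ * qd u2 t x1 x2

def flS1 (σ : ℝ) : ℝ → ℝ → ℝ → ℝ := fun t x1 x2 =>
  fl1 u1 t x1 x2 + σ * fl1 u2 t x1 x2

def flS2 (σ : ℝ) : ℝ → ℝ → ℝ → ℝ := fun t x1 x2 =>
  fl2 u1 t x1 x2 + σ * fl2 u2 t x1 x2

variable {u1 u2}
variable {ε : ℝ} {f1 f2 g1 g2 : ℝ → ℝ → ℝ}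

lemma smooth3_densS (hu : IsSolution ε f1 f2 g1 g2 u1 u2) (σ : ℝ) :
    Smooth3 (densS u1 u2 σ) :=
  smooth3_add (smooth3_qd hu.smooth1) (smooth3_constmul σ (smooth3_qd hu.smooth2))

lemma smooth3_flS1 (hu : IsSolution ε f1 f2 g1 g2 u1 u2) (σ : ℝ) :
    Smooth3 (flS1 u1 u2 σ) :=
  smooth3_add (smooth3_fl1 hu.smooth1) (smooth3_constmul σ (smooth3_fl1 hu.smooth2))

lemma smooth3_flS2 (hu : IsSolution ε f1 f2 g1 g2 u1 u2) (σ : ℝ) :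
    Smooth3 (flS2 u1 u2 σ) :=
  smooth3_add (smooth3_fl2 hu.smooth1) (smooth3_constmul σ (smooth3_fl2 hu.smooth2))

/-- Pointwise identity for the combined density, using the PDE (valid for `t > 0`). -/
lemma densS_t_deriv (hu : IsSolution ε f1 f2 g1 g2 u1 u2) (σ : ℝ)
    {t : ℝ} (ht : 0 < t) (x1 x2 : ℝ) :
    pt (densS u1 u2 σ) t x1 x2 =
      p1 (flS1 u1 u2 σ) t x1 x2 + p2 (flS2 u1 u2 σ) t x1 x2
        - 2 * (1 + σ) * (pt u1 t x1 x2 * pt u2 t x1 x2) ^ 2 := by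
  have ed : pt (densS u1 u2 σ) t x1 x2
      = pt (qd u1) t x1 x2 + σ * pt (qd u2) t x1 x2 := by
    rw [show densS u1 u2 σ = fun t x1 x2 => qd u1 t x1 x2 + σ * qd u2 t x1 x2 from rfl,
      pt_add (smooth3_qd hu.smooth1) (smooth3_constmul σ (smooth3_qd hu.smooth2)),
      pt_cmul σ (smooth3_qd hu.smooth2)]
  have e1 : p1 (flS1 u1 u2 σ) t x1 x2
      = p1 (fl1 u1) t x1 x2 + σ * p1 (fl1 u2) t x1 x2 := by
    rw [show flS1 u1 u2 σ = fun t x1 x2 => fl1 u1 t x1 x2 + σ * fl1 u2 t x1 x2 from rfl,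
      p1_add (smooth3_fl1 hu.smooth1) (smooth3_constmul σ (smooth3_fl1 hu.smooth2)),
      p1_cmul σ (smooth3_fl1 hu.smooth2)]
  have e2 : p2 (flS2 u1 u2 σ) t x1 x2
      = p2 (fl2 u1) t x1 x2 + σ * p2 (fl2 u2) t x1 x2 := by
    rw [show flS2 u1 u2 σ = fun t x1 x2 => fl2 u1 t x1 x2 + σ * fl2 u2 t x1 x2 from rfl,
      p2_add (smooth3_fl2 hu.smooth1) (smooth3_constmul σ (smooth3_fl2 hu.smooth2)),
      p2_cmul σ (smooth3_fl2 hu.smooth2)]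
  rw [ed, qd_t_deriv hu.smooth1, qd_t_deriv hu.smooth2, e1, e2,
    hu.pde1 t x1 x2 ht, hu.pde2 t x1 x2 ht]
  ring

end Pair
end NB
namespace NB
open MeasureTheory

section Main

variable {u1 u2 : ℝ → ℝ → ℝ → ℝ} {ε : ℝ} {f1 f2 g1 g2 : ℝ → ℝ → ℝ}

/-- Derivative of the weighted energy integral, `t₀ > 0`. -/
lemma main_hasDerivAt (hu : IsSolution ε f1 f2 g1 g2 u1 u2) (σ : ℝ)
    {aa bb : ℝ} (C : Cutoff aa bb) {δ ca1 ca2 : ℝ} (hδ : 0 < δ)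
    {t₀ : ℝ} (ht₀ : 0 < t₀) :
    HasDerivAt
      (fun t => ∫ x : ℝ × ℝ,
        C.χ (t + rho δ ca1 ca2 x.1 x.2) * densS u1 u2 σ t x.1 x.2)
      (∫ x : ℝ × ℝ,
        C.χ' (t₀ + rho δ ca1 ca2 x.1 x.2) *
          (densS u1 u2 σ t₀ x.1 x.2
            - (x.1 - ca1) / rho δ ca1 ca2 x.1 x.2 * flS1 u1 u2 σ t₀ x.1 x.2
            - (x.2 - ca2) / rho δ ca1 ca2 x.1 x.2 * flS2 u1 u2 σ t₀ x.1 x.2)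
        - 2 * (1 + σ) * C.χ (t₀ + rho δ ca1 ca2 x.1 x.2) *
            (pt u1 t₀ x.1 x.2 * pt u2 t₀ x.1 x.2) ^ 2) t₀ := by
  have hρc : Continuous fun x : ℝ × ℝ => rho δ ca1 ca2 x.1 x.2 := rho_cont
  set M : ℝ := |ca1| + |ca2| + |bb| + t₀ + 1 with hM
  set K : Set (ℝ × ℝ) := Set.Icc (-M) M ×ˢ Set.Icc (-M) M with hK
  have hKc : IsCompact K := isCompact_Icc.prod isCompact_Icc
  have hcore : ∀ x1 x2 : ℝ, M < |x1| ∨ M < |x2| → ∀ t : ℝ, 0 < t →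
      bb < t + rho δ ca1 ca2 x1 x2 := by
    intro x1 x2 hx t ht
    have h1 : |bb| < rho δ ca1 ca2 x1 x2 := by
      rcases hx with h | h
      · have : |bb| < |x1 - ca1| := by
          have := abs_sub_abs_le_abs_sub x1 ca1
          have h2 := abs_nonneg ca2
          rw [hM] at h; linarith [ht₀]
        linarith [rho_ge_abs1 (a1 := ca1) (a2 := ca2) hδ x1 x2]
      · have : |bb| < |x2 - ca2| := by
          have := abs_sub_abs_le_abs_sub x2 ca2
          have h2 := abs_nonneg ca1
          rw [hM] at h; linarith [ht₀]
        linarith [rho_ge_abs2 (a1 := ca1) (a2 := ca2) hδ x1 x2]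
    nlinarith [le_abs_self bb]
  have hnotK : ∀ x : ℝ × ℝ, x ∉ K → M < |x.1| ∨ M < |x.2| := by
    intro x hx
    rw [hK, Set.mem_prod, Set.mem_Icc, Set.mem_Icc, not_and_or] at hx
    rcases hx with h | h <;> [left; right] <;>
      · rw [not_and_or, not_le, not_le] at h
        rw [lt_abs]
        rcases h with h | h
        · right; linarith
        · left; exact h
  -- continuity facts
  have contD : Continuous fun q : ℝ × (ℝ × ℝ) => densS u1 u2 σ q.1 q.2.1 q.2.2 :=
    contP (smooth3_densS hu σ)
  have contPtD : Continuous fun q : ℝ × (ℝ × ℝ) => pt (densS u1 u2 σ) q.1 q.2.1 q.2.2 :=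
    contP (smooth3_pt (smooth3_densS hu σ))
  have contW : Continuous fun q : ℝ × (ℝ × ℝ) => C.χ (q.1 + rho δ ca1 ca2 q.2.1 q.2.2) :=
    C.cont.comp (continuous_fst.add (hρc.comp continuous_snd))
  have contW' : Continuous fun q : ℝ × (ℝ × ℝ) => C.χ' (q.1 + rho δ ca1 ca2 q.2.1 q.2.2) :=
    C.cont'.comp (continuous_fst.add (hρc.comp continuous_snd))
  set F : ℝ → (ℝ × ℝ) → ℝ := fun t x =>
    C.χ (t + rho δ ca1 ca2 x.1 x.2) * densS u1 u2 σ t x.1 x.2 with hF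
  set F' : ℝ → (ℝ × ℝ) → ℝ := fun t x =>
    C.χ' (t + rho δ ca1 ca2 x.1 x.2) * densS u1 u2 σ t x.1 x.2
      + C.χ (t + rho δ ca1 ca2 x.1 x.2) * pt (densS u1 u2 σ) t x.1 x.2 with hF'
  have hFc : Continuous fun p : ℝ × (ℝ × ℝ) => F p.1 p.2 := contW.mul contD
  have hF'c : Continuous fun p : ℝ × (ℝ × ℝ) => F' p.1 p.2 :=
    (contW'.mul contD).add (contW.mul contPtD)
  have hballpos : ∀ t ∈ Metric.ball t₀ (t₀ / 2), 0 < t := by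
    intro t ht
    rw [Metric.mem_ball, Real.dist_eq] at ht
    have := neg_abs_le (t - t₀)
    linarith
  have hFsupp : ∀ t ∈ Metric.ball t₀ (t₀ / 2), ∀ x, x ∉ K → F t x = 0 := by
    intro t ht x hx
    have h := hcore x.1 x.2 (hnotK x hx) t (hballpos t ht)
    show C.χ (t + rho δ ca1 ca2 x.1 x.2) * densS u1 u2 σ t x.1 x.2 = 0
    rw [C.zero _ h.le]; ring
  have hF'supp : ∀ t ∈ Metric.ball t₀ (t₀ / 2), ∀ x, x ∉ K → F' t x = 0 := by
    intro t ht x hx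
    have h := hcore x.1 x.2 (hnotK x hx) t (hballpos t ht)
    show C.χ' (t + rho δ ca1 ca2 x.1 x.2) * densS u1 u2 σ t x.1 x.2
      + C.χ (t + rho δ ca1 ca2 x.1 x.2) * pt (densS u1 u2 σ) t x.1 x.2 = 0
    rw [C.zero _ h.le, C.deriv_zero _ (Or.inr h)]; ring
  have hder : ∀ x : ℝ × ℝ, ∀ t ∈ Metric.ball t₀ (t₀ / 2),
      HasDerivAt (fun s => F s x) (F' t x) t := by
    intro x t _
    have hχ : HasDerivAt (fun s => C.χ (s + rho δ ca1 ca2 x.1 x.2))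
        (C.χ' (t + rho δ ca1 ca2 x.1 x.2)) t := by
      have h := (C.deriv (t + rho δ ca1 ca2 x.1 x.2)).comp t
        ((hasDerivAt_id t).add_const (rho δ ca1 ca2 x.1 x.2))
      simp at h; exact h
    exact hχ.mul (hd1 (smooth3_densS hu σ) t x.1 x.2)
  have A := hasDerivAt_integral_cpt F F' t₀ (t₀ / 2) (by positivity) hFc hF'c K hKc
    hFsupp hF'supp hder
  -- rewrite the derivative value
  set d1 : ℝ → ℝ → ℝ := fun x1 x2 =>
    C.χ' (t₀ + rho δ ca1 ca2 x1 x2) * ((x1 - ca1) / rho δ ca1 ca2 x1 x2)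
        * flS1 u1 u2 σ t₀ x1 x2
      + C.χ (t₀ + rho δ ca1 ca2 x1 x2) * p1 (flS1 u1 u2 σ) t₀ x1 x2 with hd1def
  set d2 : ℝ → ℝ → ℝ := fun x1 x2 =>
    C.χ' (t₀ + rho δ ca1 ca2 x1 x2) * ((x2 - ca2) / rho δ ca1 ca2 x1 x2)
        * flS2 u1 u2 σ t₀ x1 x2
      + C.χ (t₀ + rho δ ca1 ca2 x1 x2) * p2 (flS2 u1 u2 σ) t₀ x1 x2 with hd2def
  set tgt : ℝ → ℝ → ℝ := fun x1 x2 =>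
    C.χ' (t₀ + rho δ ca1 ca2 x1 x2) *
      (densS u1 u2 σ t₀ x1 x2
        - (x1 - ca1) / rho δ ca1 ca2 x1 x2 * flS1 u1 u2 σ t₀ x1 x2
        - (x2 - ca2) / rho δ ca1 ca2 x1 x2 * flS2 u1 u2 σ t₀ x1 x2)
      - 2 * (1 + σ) * C.χ (t₀ + rho δ ca1 ca2 x1 x2) *
          (pt u1 t₀ x1 x2 * pt u2 t₀ x1 x2) ^ 2 with htgtdef
  have key : ∀ x : ℝ × ℝ, F' t₀ x = d1 x.1 x.2 + d2 x.1 x.2 + tgt x.1 x.2 := by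
    intro x
    show C.χ' (t₀ + rho δ ca1 ca2 x.1 x.2) * densS u1 u2 σ t₀ x.1 x.2
      + C.χ (t₀ + rho δ ca1 ca2 x.1 x.2) * pt (densS u1 u2 σ) t₀ x.1 x.2 = _
    rw [densS_t_deriv hu σ ht₀ x.1 x.2, hd1def, hd2def, htgtdef]
    ring
  have hzero_t₀ : ∀ x : ℝ × ℝ, x ∉ K →
      (C.χ (t₀ + rho δ ca1 ca2 x.1 x.2) = 0 ∧ C.χ' (t₀ + rho δ ca1 ca2 x.1 x.2) = 0) := by
    intro x hx
    have h := hcore x.1 x.2 (hnotK x hx) t₀ ht₀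
    exact ⟨C.zero _ h.le, C.deriv_zero _ (Or.inr h)⟩
  have intK : ∀ f : ℝ × ℝ → ℝ, Continuous f → (∀ x ∉ K, f x = 0) → Integrable f :=
    fun f hf h0 => hf.integrable_of_hasCompactSupport (HasCompactSupport.intro hKc h0)
  have contFl1 : Continuous fun x : ℝ × ℝ => flS1 u1 u2 σ t₀ x.1 x.2 :=
    (contP (smooth3_flS1 hu σ)).comp (Continuous.prodMk_right t₀)
  have contFl2 : Continuous fun x : ℝ × ℝ => flS2 u1 u2 σ t₀ x.1 x.2 :=
    (contP (smooth3_flS2 hu σ)).comp (Continuous.prodMk_right t₀)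
  have contp1Fl1 : Continuous fun x : ℝ × ℝ => p1 (flS1 u1 u2 σ) t₀ x.1 x.2 :=
    (contP (smooth3_p1 (smooth3_flS1 hu σ))).comp (Continuous.prodMk_right t₀)
  have contp2Fl2 : Continuous fun x : ℝ × ℝ => p2 (flS2 u1 u2 σ) t₀ x.1 x.2 :=
    (contP (smooth3_p2 (smooth3_flS2 hu σ))).comp (Continuous.prodMk_right t₀)
  have contχt₀ : Continuous fun x : ℝ × ℝ => C.χ (t₀ + rho δ ca1 ca2 x.1 x.2) :=
    C.cont.comp (continuous_const.add hρc)
  have contχ't₀ : Continuous fun x : ℝ × ℝ => C.χ' (t₀ + rho δ ca1 ca2 x.1 x.2) :=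
    C.cont'.comp (continuous_const.add hρc)
  have contn1 : Continuous fun x : ℝ × ℝ => (x.1 - ca1) / rho δ ca1 ca2 x.1 x.2 := by
    apply Continuous.div (by fun_prop) hρc
    intro x; exact (rho_pos hδ x.1 x.2).ne'
  have contn2 : Continuous fun x : ℝ × ℝ => (x.2 - ca2) / rho δ ca1 ca2 x.1 x.2 := by
    apply Continuous.div (by fun_prop) hρc
    intro x; exact (rho_pos hδ x.1 x.2).ne'
  have contd1 : Continuous fun x : ℝ × ℝ => d1 x.1 x.2 :=
    ((contχ't₀.mul contn1).mul contFl1).add (contχt₀.mul contp1Fl1)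
  have contd2 : Continuous fun x : ℝ × ℝ => d2 x.1 x.2 :=
    ((contχ't₀.mul contn2).mul contFl2).add (contχt₀.mul contp2Fl2)
  have contptu1 : Continuous fun x : ℝ × ℝ => pt u1 t₀ x.1 x.2 :=
    (contP (smooth3_pt hu.smooth1)).comp (Continuous.prodMk_right t₀)
  have contptu2 : Continuous fun x : ℝ × ℝ => pt u2 t₀ x.1 x.2 :=
    (contP (smooth3_pt hu.smooth2)).comp (Continuous.prodMk_right t₀)
  have conttgt : Continuous fun x : ℝ × ℝ => tgt x.1 x.2 :=
    (contχ't₀.mul (((contD.comp (Continuous.prodMk_right t₀)).sub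
        (contn1.mul contFl1)).sub (contn2.mul contFl2))).sub
      ((continuous_const.mul contχt₀).mul ((contptu1.mul contptu2).pow 2))
  have intd1 : Integrable (fun x : ℝ × ℝ => d1 x.1 x.2) := intK _ contd1 (fun x hx => by
    show d1 x.1 x.2 = 0
    rw [hd1def]; simp only
    rw [(hzero_t₀ x hx).1, (hzero_t₀ x hx).2]; ring)
  have intd2 : Integrable (fun x : ℝ × ℝ => d2 x.1 x.2) := intK _ contd2 (fun x hx => by
    show d2 x.1 x.2 = 0
    rw [hd2def]; simp only
    rw [(hzero_t₀ x hx).1, (hzero_t₀ x hx).2]; ring)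
  have inttgt : Integrable (fun x : ℝ × ℝ => tgt x.1 x.2) := intK _ conttgt (fun x hx => by
    show tgt x.1 x.2 = 0
    rw [htgtdef]; simp only
    rw [(hzero_t₀ x hx).1, (hzero_t₀ x hx).2]; ring)
  have eq1 : ∫ x : ℝ × ℝ, d1 x.1 x.2 = 0 := by
    have hgder : ∀ x1 x2 : ℝ,
        HasDerivAt (fun y => C.χ (t₀ + rho δ ca1 ca2 y x2) * flS1 u1 u2 σ t₀ y x2)
          (d1 x1 x2) x1 := by
      intro x1 x2
      have hχ1 : HasDerivAt (fun y => C.χ (t₀ + rho δ ca1 ca2 y x2))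
          (C.χ' (t₀ + rho δ ca1 ca2 x1 x2) * ((x1 - ca1) / rho δ ca1 ca2 x1 x2)) x1 := by
        have h := (C.deriv (t₀ + rho δ ca1 ca2 x1 x2)).comp x1
          ((rho_hasDerivAt_1 hδ x1 x2).const_add t₀)
        exact h
      exact hχ1.mul (hd2 (smooth3_flS1 hu σ) t₀ x1 x2)
    exact integral_partial1_zero _ _ hgder (contχt₀.mul contFl1) contd1 M
      (fun x1 x2 hx => by
        have h := hcore x1 x2 hx t₀ ht₀
        rw [C.zero _ h.le]; ring)
  have eq2 : ∫ x : ℝ × ℝ, d2 x.1 x.2 = 0 := by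
    have hgder : ∀ x1 x2 : ℝ,
        HasDerivAt (fun y => C.χ (t₀ + rho δ ca1 ca2 x1 y) * flS2 u1 u2 σ t₀ x1 y)
          (d2 x1 x2) x2 := by
      intro x1 x2
      have hχ2 : HasDerivAt (fun y => C.χ (t₀ + rho δ ca1 ca2 x1 y))
          (C.χ' (t₀ + rho δ ca1 ca2 x1 x2) * ((x2 - ca2) / rho δ ca1 ca2 x1 x2)) x2 := by
        have h := (C.deriv (t₀ + rho δ ca1 ca2 x1 x2)).comp x2
          ((rho_hasDerivAt_2 hδ x1 x2).const_add t₀)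
        exact h
      exact hχ2.mul (hd3 (smooth3_flS2 hu σ) t₀ x1 x2)
    exact integral_partial2_zero _ _ hgder (contχt₀.mul contFl2) contd2 M
      (fun x1 x2 hx => by
        have h := hcore x1 x2 hx t₀ ht₀
        rw [C.zero _ h.le]; ring)
  have intd12 : Integrable (fun x : ℝ × ℝ => d1 x.1 x.2 + d2 x.1 x.2) := intd1.add intd2
  have hval : (∫ x : ℝ × ℝ, F' t₀ x) = ∫ x : ℝ × ℝ, tgt x.1 x.2 := by
    rw [show (fun x : ℝ × ℝ => F' t₀ x)
        = fun x : ℝ × ℝ => d1 x.1 x.2 + d2 x.1 x.2 + tgt x.1 x.2 from funext key]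
    rw [integral_add intd12 inttgt, integral_add intd1 intd2, eq1, eq2]
    ring
  rw [hval] at A
  exact A

end Main
end NB
namespace NB
open MeasureTheory

section Step1

variable {u1 u2 : ℝ → ℝ → ℝ → ℝ} {ε : ℝ} {f1 f2 g1 g2 : ℝ → ℝ → ℝ}

lemma rho_big_outside {δ : ℝ} (hδ : 0 < δ) (ca1 ca2 b T : ℝ) :
    ∃ K : Set (ℝ × ℝ), IsCompact K ∧
      ∀ t : ℝ, |t| ≤ T → ∀ x : ℝ × ℝ, x ∉ K → b < t + rho δ ca1 ca2 x.1 x.2 := by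
  set M : ℝ := |ca1| + |ca2| + |b| + T + 1 with hM
  refine ⟨Set.Icc (-M) M ×ˢ Set.Icc (-M) M, isCompact_Icc.prod isCompact_Icc, ?_⟩
  intro t ht x hx
  have hTnn : 0 ≤ T := le_trans (abs_nonneg t) ht
  have hnotK : M < |x.1| ∨ M < |x.2| := by
    rw [Set.mem_prod, Set.mem_Icc, Set.mem_Icc, not_and_or] at hx
    rcases hx with h | h <;> [left; right] <;>
      · rw [not_and_or, not_le, not_le] at h
        rw [lt_abs]
        rcases h with h | h
        · right; linarith
        · left; exact h
  have h1 : |b| + T < rho δ ca1 ca2 x.1 x.2 := by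
    rcases hnotK with h | h
    · have : |b| + T < |x.1 - ca1| := by
        have := abs_sub_abs_le_abs_sub x.1 ca1
        have h2 := abs_nonneg ca2
        rw [hM] at h; linarith
      linarith [rho_ge_abs1 (a1 := ca1) (a2 := ca2) hδ x.1 x.2]
    · have : |b| + T < |x.2 - ca2| := by
        have := abs_sub_abs_le_abs_sub x.2 ca2
        have h2 := abs_nonneg ca1
        rw [hM] at h; linarith
      linarith [rho_ge_abs2 (a1 := ca1) (a2 := ca2) hδ x.1 x.2]
  have := neg_abs_le t
  have := le_abs_self b
  linarith

/-- The weighted energy integral is continuous in `t` (no PDE needed). -/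
lemma weighted_continuous (hu : IsSolution ε f1 f2 g1 g2 u1 u2) (σ : ℝ)
    {aa bb : ℝ} (C : Cutoff aa bb) {δ ca1 ca2 : ℝ} (hδ : 0 < δ) :
    Continuous fun t => ∫ x : ℝ × ℝ,
      C.χ (t + rho δ ca1 ca2 x.1 x.2) * densS u1 u2 σ t x.1 x.2 := by
  rw [continuous_iff_continuousAt]
  intro t₀
  obtain ⟨K, hKc, hKv⟩ := rho_big_outside hδ ca1 ca2 bb (|t₀| + 1)
  have hρc : Continuous fun x : ℝ × ℝ => rho δ ca1 ca2 x.1 x.2 := rho_cont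
  apply continuousAt_integral_cpt _ t₀
    ((C.cont.comp (continuous_fst.add (hρc.comp continuous_snd))).mul
      (contP (smooth3_densS hu σ)))
    K hKc
  intro t ht x hx
  have habs : |t| ≤ |t₀| + 1 := by
    rw [Set.mem_Icc] at ht
    rw [abs_le]
    constructor <;> [linarith [neg_abs_le t₀]; linarith [le_abs_self t₀]]
  rw [C.zero _ (hKv t habs x hx).le]
  ring

/-- Integrability of the weighted density at a fixed time. -/
lemma weighted_integrable (hu : IsSolution ε f1 f2 g1 g2 u1 u2) (σ : ℝ)
    {aa bb : ℝ} (C : Cutoff aa bb) {δ ca1 ca2 : ℝ} (hδ : 0 < δ) (t : ℝ) :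
    Integrable (fun x : ℝ × ℝ =>
      C.χ (t + rho δ ca1 ca2 x.1 x.2) * densS u1 u2 σ t x.1 x.2) := by
  obtain ⟨K, hKc, hKv⟩ := rho_big_outside hδ ca1 ca2 bb (|t|)
  have hρc : Continuous fun x : ℝ × ℝ => rho δ ca1 ca2 x.1 x.2 := rho_cont
  have hcont : Continuous (fun x : ℝ × ℝ =>
      C.χ (t + rho δ ca1 ca2 x.1 x.2) * densS u1 u2 σ t x.1 x.2) :=
    (C.cont.comp (continuous_const.add hρc)).mul
      ((contP (smooth3_densS hu σ)).comp (Continuous.prodMk_right t))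
  apply hcont.integrable_of_hasCompactSupport
  apply HasCompactSupport.intro hKc
  intro x hx
  rw [C.zero _ (hKv t le_rfl x hx).le]
  ring

/-- Vanishing of the six data derivatives outside a large ball. -/
lemma data_support (hu : IsSolution ε f1 f2 g1 g2 u1 u2)
    (hf1 : SmoothCompact2 f1) (hf2 : SmoothCompact2 f2)
    (hg1 : SmoothCompact2 g1) (hg2 : SmoothCompact2 g2) :
    ∃ R : ℝ, 0 < R ∧ ∀ x1 x2 : ℝ, R < r2 x1 x2 →
      pt u1 0 x1 x2 = 0 ∧ p1 u1 0 x1 x2 = 0 ∧ p2 u1 0 x1 x2 = 0 ∧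
      pt u2 0 x1 x2 = 0 ∧ p1 u2 0 x1 x2 = 0 ∧ p2 u2 0 x1 x2 = 0 := by
  have hball : ∀ f : ℝ → ℝ → ℝ, SmoothCompact2 f → ∃ R0 : ℝ,
      ∀ y z : ℝ, R0 < max |y| |z| → f y z = 0 := by
    intro f hf
    obtain ⟨R0, hR0⟩ := (hf.2.isBounded).subset_closedBall 0
    refine ⟨R0, fun y z h => ?_⟩
    by_contra hne
    have hmem : ((y, z) : ℝ × ℝ) ∈ tsupport fun p : ℝ × ℝ => f p.1 p.2 :=
      subset_closure (by simp [Function.mem_support, hne])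
    have := hR0 hmem
    rw [Metric.mem_closedBall, dist_zero_right, Prod.norm_def] at this
    simp only [Real.norm_eq_abs] at this
    linarith
  obtain ⟨Ra, hRa⟩ := hball f1 hf1
  obtain ⟨Rb, hRb⟩ := hball f2 hf2
  obtain ⟨Rc, hRc⟩ := hball g1 hg1
  obtain ⟨Rd, hRd⟩ := hball g2 hg2
  set R0 : ℝ := max (max |Ra| |Rb|) (max |Rc| |Rd|) with hR0
  have hR0nn : 0 ≤ R0 := le_trans (abs_nonneg Ra) (le_trans (le_max_left _ _) (le_max_left _ _))
  set R : ℝ := 2 * R0 + 2 with hR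
  have hkey : ∀ x1 x2 : ℝ, R < r2 x1 x2 → R0 < max |x1| |x2| := by
    intro x1 x2 h
    have hr2 := r2_sq x1 x2
    have hrnn := r2_nonneg x1 x2
    by_contra hle
    rw [not_lt] at hle
    have h1 : |x1| ≤ R0 := le_trans (le_max_left _ _) hle
    have h2 : |x2| ≤ R0 := le_trans (le_max_right _ _) hle
    have : x1 ^ 2 + x2 ^ 2 ≤ 2 * R0 ^ 2 := by
      nlinarith [abs_nonneg x1, abs_nonneg x2, sq_abs x1, sq_abs x2]
    nlinarith
  -- slice derivative helper
  have hslice1 : ∀ (f : ℝ → ℝ → ℝ) (Rf : ℝ), (∀ y z, Rf < max |y| |z| → f y z = 0) →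
      ∀ x1 x2 : ℝ, Rf < max |x1| |x2| → deriv (fun y => f y x2) x1 = 0 := by
    intro f Rf hf x1 x2 h
    by_cases h2 : Rf < |x2|
    · have : (fun y => f y x2) = fun _ => 0 :=
        funext fun y => hf y x2 (lt_of_lt_of_le h2 (le_max_right _ _))
      rw [this, deriv_const]
    · rw [not_lt] at h2
      have h1 : Rf < |x1| := by
        rcases max_cases |x1| |x2| with ⟨he, _⟩ | ⟨he, _⟩ <;> rw [he] at h <;> [exact h; linarith]
      have hev : (fun y => f y x2) =ᶠ[nhds x1] fun _ => 0 := by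
        refine Filter.eventuallyEq_of_mem
          ((isOpen_lt continuous_const continuous_abs).mem_nhds h1) fun y hy => ?_
        exact hf y x2 (lt_of_lt_of_le hy (le_max_left _ _))
      rw [hev.deriv_eq, deriv_const]
  have hslice2 : ∀ (f : ℝ → ℝ → ℝ) (Rf : ℝ), (∀ y z, Rf < max |y| |z| → f y z = 0) →
      ∀ x1 x2 : ℝ, Rf < max |x1| |x2| → deriv (fun y => f x1 y) x2 = 0 := by
    intro f Rf hf x1 x2 h
    have := hslice1 (fun a b => f b a) Rf (fun y z hyz => hf z y (by rwa [max_comm])) x2 x1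
      (by rwa [max_comm])
    exact this
  refine ⟨R, by positivity, fun x1 x2 hx => ?_⟩
  have hmax := hkey x1 x2 hx
  have hRa' : ∀ y z, R0 < max |y| |z| → f1 y z = 0 := fun y z h =>
    hRa y z (lt_of_le_of_lt (le_trans (le_abs_self Ra)
      (le_trans (le_max_left _ _) (le_max_left _ _))) h)
  have hRb' : ∀ y z, R0 < max |y| |z| → f2 y z = 0 := fun y z h =>
    hRb y z (lt_of_le_of_lt (le_trans (le_abs_self Rb)
      (le_trans (le_max_right _ _) (le_max_left _ _))) h)
  have hRc' : ∀ y z, R0 < max |y| |z| → g1 y z = 0 := fun y z h =>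
    hRc y z (lt_of_le_of_lt (le_trans (le_abs_self Rc)
      (le_trans (le_max_left _ _) (le_max_right _ _))) h)
  have hRd' : ∀ y z, R0 < max |y| |z| → g2 y z = 0 := fun y z h =>
    hRd y z (lt_of_le_of_lt (le_trans (le_abs_self Rd)
      (le_trans (le_max_right _ _) (le_max_right _ _))) h)
  refine ⟨?_, ?_, ?_, ?_, ?_, ?_⟩
  · rw [hu.initd1 x1 x2, hRc' x1 x2 hmax]; ring
  · show deriv (fun y => u1 0 y x2) x1 = 0
    rw [show (fun y => u1 0 y x2) = fun y => ε * f1 y x2 from funext fun y => hu.init1 y x2]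
    exact hslice1 (fun y z => ε * f1 y z) R0 (fun y z h => by show ε * f1 y z = 0; rw [hRa' y z h]; ring) x1 x2 hmax
  · show deriv (fun y => u1 0 x1 y) x2 = 0
    rw [show (fun y => u1 0 x1 y) = fun y => ε * f1 x1 y from funext fun y => hu.init1 x1 y]
    exact hslice2 (fun y z => ε * f1 y z) R0 (fun y z h => by show ε * f1 y z = 0; rw [hRa' y z h]; ring) x1 x2 hmax
  · rw [hu.initd2 x1 x2, hRd' x1 x2 hmax]; ring
  · show deriv (fun y => u2 0 y x2) x1 = 0
    rw [show (fun y => u2 0 y x2) = fun y => ε * f2 y x2 from funext fun y => hu.init2 y x2]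
    exact hslice1 (fun y z => ε * f2 y z) R0 (fun y z h => by show ε * f2 y z = 0; rw [hRb' y z h]; ring) x1 x2 hmax
  · show deriv (fun y => u2 0 x1 y) x2 = 0
    rw [show (fun y => u2 0 x1 y) = fun y => ε * f2 x1 y from funext fun y => hu.init2 x1 y]
    exact hslice2 (fun y z => ε * f2 y z) R0 (fun y z h => by show ε * f2 y z = 0; rw [hRb' y z h]; ring) x1 x2 hmax

end Step1
end NB
namespace NB
open MeasureTheory

section Step1b

variable {u1 u2 : ℝ → ℝ → ℝ → ℝ} {ε : ℝ} {f1 f2 g1 g2 : ℝ → ℝ → ℝ}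

set_option maxHeartbeats 2000000 in
lemma finite_speed (hu : IsSolution ε f1 f2 g1 g2 u1 u2)
    (hf1 : SmoothCompact2 f1) (hf2 : SmoothCompact2 f2)
    (hg1 : SmoothCompact2 g1) (hg2 : SmoothCompact2 g2) :
    ∃ R : ℝ, 0 < R ∧ ∀ t x1 x2 : ℝ, 0 ≤ t → R + t < r2 x1 x2 →
      pt u1 t x1 x2 = 0 ∧ p1 u1 t x1 x2 = 0 ∧ p2 u1 t x1 x2 = 0 ∧
      pt u2 t x1 x2 = 0 ∧ p1 u2 t x1 x2 = 0 ∧ p2 u2 t x1 x2 = 0 := by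
  obtain ⟨R, hRpos, hR⟩ := data_support hu hf1 hf2 hg1 hg2
  refine ⟨R, hRpos, ?_⟩
  intro tb xb1 xb2 htb hxb
  rcases eq_or_lt_of_le htb with ht0 | ht0
  · subst ht0
    exact hR xb1 xb2 (by linarith)
  · -- positive time
    set δ : ℝ := (r2 xb1 xb2 - R - tb) / 3 with hδdef
    have hδ : 0 < δ := by rw [hδdef]; linarith
    have hr2eq : r2 xb1 xb2 = R + tb + 3 * δ := by rw [hδdef]; ring
    obtain ⟨C⟩ := cutoff_exists (show tb + δ < tb + 2 * δ by linarith)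
    set I : ℝ → ℝ := fun t => ∫ x : ℝ × ℝ,
      C.χ (t + rho δ xb1 xb2 x.1 x.2) * densS u1 u2 1 t x.1 x.2 with hI
    have hcont : Continuous I := weighted_continuous hu 1 C hδ
    -- derivative nonpositive on the open interval
    have hJle : ∀ t : ℝ, 0 < t → (∫ x : ℝ × ℝ,
        C.χ' (t + rho δ xb1 xb2 x.1 x.2) *
          (densS u1 u2 1 t x.1 x.2
            - (x.1 - xb1) / rho δ xb1 xb2 x.1 x.2 * flS1 u1 u2 1 t x.1 x.2
            - (x.2 - xb2) / rho δ xb1 xb2 x.1 x.2 * flS2 u1 u2 1 t x.1 x.2)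
        - 2 * (1 + 1) * C.χ (t + rho δ xb1 xb2 x.1 x.2) *
            (pt u1 t x.1 x.2 * pt u2 t x.1 x.2) ^ 2) ≤ 0 := by
      intro t ht
      apply integral_nonpos
      intro x
      show C.χ' (t + rho δ xb1 xb2 x.1 x.2) * _ - _ ≤ 0
      have hn := rho_grad_le (a1 := xb1) (a2 := xb2) hδ x.1 x.2
      set n1 : ℝ := (x.1 - xb1) / rho δ xb1 xb2 x.1 x.2
      set n2 : ℝ := (x.2 - xb2) / rho δ xb1 xb2 x.1 x.2
      set a := pt u1 t x.1 x.2; set b := p1 u1 t x.1 x.2; set c := p2 u1 t x.1 x.2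
      set d := pt u2 t x.1 x.2; set e := p1 u2 t x.1 x.2; set f := p2 u2 t x.1 x.2
      have hfac : 0 ≤ densS u1 u2 1 t x.1 x.2 - n1 * flS1 u1 u2 1 t x.1 x.2
          - n2 * flS2 u1 u2 1 t x.1 x.2 := by
        show 0 ≤ (a * a + b * b + c * c) + 1 * (d * d + e * e + f * f)
          - n1 * (2 * (a * b) + 1 * (2 * (d * e))) - n2 * (2 * (a * c) + 1 * (2 * (d * f)))
        nlinarith [sq_nonneg (n1 * a - b), sq_nonneg (n2 * a - c), sq_nonneg (n1 * d - e),
          sq_nonneg (n2 * d - f), mul_self_nonneg a, mul_self_nonneg d,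
          mul_nonneg (sub_nonneg.2 hn) (add_nonneg (mul_self_nonneg a) (mul_self_nonneg d))]
      have h1 : C.χ' (t + rho δ xb1 xb2 x.1 x.2) *
          (densS u1 u2 1 t x.1 x.2 - n1 * flS1 u1 u2 1 t x.1 x.2
            - n2 * flS2 u1 u2 1 t x.1 x.2) ≤ 0 :=
        mul_nonpos_of_nonpos_of_nonneg (C.deriv_nonpos _) hfac
      have h2 : 0 ≤ 2 * (1 + 1) * C.χ (t + rho δ xb1 xb2 x.1 x.2) * (a * d) ^ 2 := by
        have := C.nonneg (t + rho δ xb1 xb2 x.1 x.2)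
        positivity
      linarith
    have hanti : AntitoneOn I (Set.Icc 0 tb) := by
      apply antitoneOn_of_deriv_nonpos (convex_Icc 0 tb) hcont.continuousOn
      · intro t ht
        rw [interior_Icc] at ht
        exact (main_hasDerivAt hu 1 C hδ ht.1).differentiableAt.differentiableWithinAt
      · intro t ht
        rw [interior_Icc] at ht
        rw [(main_hasDerivAt hu 1 C hδ ht.1).deriv]
        exact hJle t ht.1
    -- dens is nonneg
    have hdensnn : ∀ t : ℝ, ∀ x : ℝ × ℝ, 0 ≤ densS u1 u2 1 t x.1 x.2 := by
      intro t x
      show 0 ≤ (pt u1 t x.1 x.2 * pt u1 t x.1 x.2 + _ * _ + _ * _) + 1 * (_ * _ + _ * _ + _ * _)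
      nlinarith [mul_self_nonneg (pt u1 t x.1 x.2), mul_self_nonneg (p1 u1 t x.1 x.2),
        mul_self_nonneg (p2 u1 t x.1 x.2), mul_self_nonneg (pt u2 t x.1 x.2),
        mul_self_nonneg (p1 u2 t x.1 x.2), mul_self_nonneg (p2 u2 t x.1 x.2)]
    -- I 0 = 0
    have hI0 : I 0 = 0 := by
      rw [hI]
      show (∫ x : ℝ × ℝ, C.χ (0 + rho δ xb1 xb2 x.1 x.2) * densS u1 u2 1 0 x.1 x.2) = 0
      have : ∀ x : ℝ × ℝ, C.χ (0 + rho δ xb1 xb2 x.1 x.2) * densS u1 u2 1 0 x.1 x.2 = 0 := by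
        intro x
        by_cases hd : densS u1 u2 1 0 x.1 x.2 = 0
        · rw [hd]; ring
        · have hr2x : r2 x.1 x.2 ≤ R := by
            by_contra hlt
            rw [not_le] at hlt
            obtain ⟨e1, e2, e3, e4, e5, e6⟩ := hR x.1 x.2 hlt
            apply hd
            show (pt u1 0 x.1 x.2 * pt u1 0 x.1 x.2 + _ * _ + _ * _) + 1 * (_ * _ + _ * _ + _ * _) = 0
            rw [e1, e2, e3, e4, e5, e6]; ring
          have htri : r2 xb1 xb2 ≤ r2 (xb1 - x.1) (xb2 - x.2) + r2 x.1 x.2 := by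
            have := r2_triangle (xb1 - x.1) (xb2 - x.2) x.1 x.2
            simpa using this
          have hrge : r2 (x.1 - xb1) (x.2 - xb2) ≤ rho δ xb1 xb2 x.1 x.2 := rho_ge hδ x.1 x.2
          have hflip : r2 (xb1 - x.1) (xb2 - x.2) = r2 (x.1 - xb1) (x.2 - xb2) := by
            rw [r2, r2]; ring_nf
          have : tb + 2 * δ ≤ 0 + rho δ xb1 xb2 x.1 x.2 := by
            rw [hflip] at htri
            linarith [hr2eq ▸ htri]
          rw [C.zero _ this]; ring
      rw [show (fun x : ℝ × ℝ => C.χ (0 + rho δ xb1 xb2 x.1 x.2) * densS u1 u2 1 0 x.1 x.2)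
          = fun _ => (0 : ℝ) from funext this]
      exact integral_zero _ _
    have hItb0 : I tb = 0 := by
      have h1 : I tb ≤ I 0 := hanti (Set.left_mem_Icc.2 htb) (Set.right_mem_Icc.2 htb) htb
      have h2 : 0 ≤ I tb := integral_nonneg fun x =>
        mul_nonneg (C.nonneg _) (hdensnn tb x)
      linarith [hI0 ▸ h1]
    -- extraction
    have hzero := eq_zero_of_integral_zero _
      ((C.cont.comp (continuous_const.add rho_cont)).mul
        ((contP (smooth3_densS hu 1)).comp (Continuous.prodMk_right tb)))
      (fun x => mul_nonneg (C.nonneg _) (hdensnn tb x))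
      (weighted_integrable hu 1 C hδ tb) hItb0 (xb1, xb2)
    have hzero' : C.χ (tb + rho δ xb1 xb2 xb1 xb2) * densS u1 u2 1 tb xb1 xb2 = 0 := hzero
    rw [show rho δ xb1 xb2 xb1 xb2 = δ from rho_center hδ,
      C.one (tb + δ) le_rfl, one_mul] at hzero'
    simp only [densS, qd] at hzero'
    have ee0 : pt u1 tb xb1 xb2 * pt u1 tb xb1 xb2 = 0 := by
      nlinarith [hzero', mul_self_nonneg (pt u1 tb xb1 xb2), mul_self_nonneg (p1 u1 tb xb1 xb2),
        mul_self_nonneg (p2 u1 tb xb1 xb2), mul_self_nonneg (pt u2 tb xb1 xb2),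
        mul_self_nonneg (p1 u2 tb xb1 xb2), mul_self_nonneg (p2 u2 tb xb1 xb2)]
    have ee1 : p1 u1 tb xb1 xb2 * p1 u1 tb xb1 xb2 = 0 := by
      nlinarith [hzero', mul_self_nonneg (pt u1 tb xb1 xb2), mul_self_nonneg (p1 u1 tb xb1 xb2),
        mul_self_nonneg (p2 u1 tb xb1 xb2), mul_self_nonneg (pt u2 tb xb1 xb2),
        mul_self_nonneg (p1 u2 tb xb1 xb2), mul_self_nonneg (p2 u2 tb xb1 xb2)]
    have ee2 : p2 u1 tb xb1 xb2 * p2 u1 tb xb1 xb2 = 0 := by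
      nlinarith [hzero', mul_self_nonneg (pt u1 tb xb1 xb2), mul_self_nonneg (p1 u1 tb xb1 xb2),
        mul_self_nonneg (p2 u1 tb xb1 xb2), mul_self_nonneg (pt u2 tb xb1 xb2),
        mul_self_nonneg (p1 u2 tb xb1 xb2), mul_self_nonneg (p2 u2 tb xb1 xb2)]
    have ee3 : pt u2 tb xb1 xb2 * pt u2 tb xb1 xb2 = 0 := by
      nlinarith [hzero', mul_self_nonneg (pt u1 tb xb1 xb2), mul_self_nonneg (p1 u1 tb xb1 xb2),
        mul_self_nonneg (p2 u1 tb xb1 xb2), mul_self_nonneg (pt u2 tb xb1 xb2),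
        mul_self_nonneg (p1 u2 tb xb1 xb2), mul_self_nonneg (p2 u2 tb xb1 xb2)]
    have ee4 : p1 u2 tb xb1 xb2 * p1 u2 tb xb1 xb2 = 0 := by
      nlinarith [hzero', mul_self_nonneg (pt u1 tb xb1 xb2), mul_self_nonneg (p1 u1 tb xb1 xb2),
        mul_self_nonneg (p2 u1 tb xb1 xb2), mul_self_nonneg (pt u2 tb xb1 xb2),
        mul_self_nonneg (p1 u2 tb xb1 xb2), mul_self_nonneg (p2 u2 tb xb1 xb2)]
    have ee5 : p2 u2 tb xb1 xb2 * p2 u2 tb xb1 xb2 = 0 := by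
      nlinarith [hzero', mul_self_nonneg (pt u1 tb xb1 xb2), mul_self_nonneg (p1 u1 tb xb1 xb2),
        mul_self_nonneg (p2 u1 tb xb1 xb2), mul_self_nonneg (pt u2 tb xb1 xb2),
        mul_self_nonneg (p1 u2 tb xb1 xb2), mul_self_nonneg (p2 u2 tb xb1 xb2)]
    exact ⟨mul_self_eq_zero.1 ee0, mul_self_eq_zero.1 ee1, mul_self_eq_zero.1 ee2,
      mul_self_eq_zero.1 ee3, mul_self_eq_zero.1 ee4, mul_self_eq_zero.1 ee5⟩

end Step1b
end NB
namespace NB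
open MeasureTheory Filter

section Step2

variable {u1 u2 : ℝ → ℝ → ℝ → ℝ} {ε : ℝ} {f1 f2 g1 g2 : ℝ → ℝ → ℝ}

lemma abs_le_r2_1 (x1 x2 : ℝ) : |x1| ≤ r2 x1 x2 := by
  rw [← Real.sqrt_sq_eq_abs]
  exact Real.sqrt_le_sqrt (by nlinarith [sq_nonneg x2])

lemma abs_le_r2_2 (x1 x2 : ℝ) : |x2| ≤ r2 x1 x2 := by
  rw [← Real.sqrt_sq_eq_abs]
  exact Real.sqrt_le_sqrt (by nlinarith [sq_nonneg x1])

lemma rho_le_one_add_r2 (x1 x2 : ℝ) : rho 1 0 0 x1 x2 ≤ 1 + r2 x1 x2 := by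
  have h := rho_le (a1 := (0:ℝ)) (a2 := (0:ℝ)) one_pos x1 x2
  simpa [r2] using h

lemma r2_ge_rho_sub_one (x1 x2 : ℝ) : rho 1 0 0 x1 x2 - 1 ≤ r2 x1 x2 := by
  linarith [rho_le_one_add_r2 x1 x2]

/-- Integrability of a single energy density with cone support. -/
lemma qd_integrable (hsm : Smooth3 u1) {R t : ℝ}
    (hvan : ∀ x1 x2 : ℝ, R + t < r2 x1 x2 → qd u1 t x1 x2 = 0) :
    Integrable (fun x : ℝ × ℝ => qd u1 t x.1 x.2) := by
  have hcont : Continuous fun x : ℝ × ℝ => qd u1 t x.1 x.2 :=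
    (contP (smooth3_qd hsm)).comp (Continuous.prodMk_right t)
  apply hcont.integrable_of_hasCompactSupport
  apply HasCompactSupport.intro
    (isCompact_Icc.prod isCompact_Icc :
      IsCompact (Set.Icc (-(|R + t| + 1)) (|R + t| + 1) ×ˢ Set.Icc (-(|R + t| + 1)) (|R + t| + 1)))
  intro x hx
  apply hvan
  rw [Set.mem_prod, Set.mem_Icc, Set.mem_Icc, not_and_or] at hx
  have hr : |R + t| + 1 < |x.1| ∨ |R + t| + 1 < |x.2| := by
    rcases hx with h | h <;> [left; right] <;>
      · rw [not_and_or, not_le, not_le] at h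
        rw [lt_abs]
        rcases h with h | h
        · right; linarith
        · left; exact h
  rcases hr with h | h
  · calc R + t ≤ |R + t| := le_abs_self _
      _ < |x.1| := by linarith
      _ ≤ r2 x.1 x.2 := abs_le_r2_1 _ _
  · calc R + t ≤ |R + t| := le_abs_self _
      _ < |x.2| := by linarith
      _ ≤ r2 x.1 x.2 := abs_le_r2_2 _ _

/-- Conservation of the energy difference. -/
lemma energy_diff_const (hu : IsSolution ε f1 f2 g1 g2 u1 u2)
    (hf1 : SmoothCompact2 f1) (hf2 : SmoothCompact2 f2)
    (hg1 : SmoothCompact2 g1) (hg2 : SmoothCompact2 g2) :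
    ∀ t : ℝ, 0 ≤ t →
      energySq u1 t - energySq u2 t = energySq u1 0 - energySq u2 0 := by
  obtain ⟨R, hRpos, hR⟩ := finite_speed hu hf1 hf2 hg1 hg2
  intro T hT
  rcases eq_or_lt_of_le hT with h0 | hTpos
  · rw [← h0]
  -- cutoff parameters
  obtain ⟨C⟩ := cutoff_exists (show R + 2 * T + 2 < R + 2 * T + 3 by linarith)
  set I : ℝ → ℝ := fun t => ∫ x : ℝ × ℝ,
    C.χ (t + rho 1 0 0 x.1 x.2) * densS u1 u2 (-1) t x.1 x.2 with hI
  have hcont : Continuous I := weighted_continuous hu (-1) C one_pos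
  -- six-derivative vanishing wrapper
  have hsix : ∀ t x1 x2 : ℝ, 0 ≤ t → R + t < r2 x1 x2 →
      densS u1 u2 (-1) t x1 x2 = 0 ∧ flS1 u1 u2 (-1) t x1 x2 = 0 ∧
      flS2 u1 u2 (-1) t x1 x2 = 0 ∧ qd u1 t x1 x2 = 0 ∧ qd u2 t x1 x2 = 0 := by
    intro t x1 x2 ht hx
    obtain ⟨e1, e2, e3, e4, e5, e6⟩ := hR t x1 x2 ht hx
    refine ⟨?_, ?_, ?_, ?_, ?_⟩ <;>
      · simp only [densS, flS1, flS2, qd, fl1, fl2, e1, e2, e3, e4, e5, e6]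
        ring
  -- the derivative of I vanishes on (0, T)
  have hJzero : ∀ t ∈ Set.Ioo (0:ℝ) T, (∫ x : ℝ × ℝ,
      C.χ' (t + rho 1 0 0 x.1 x.2) *
        (densS u1 u2 (-1) t x.1 x.2
          - (x.1 - 0) / rho 1 0 0 x.1 x.2 * flS1 u1 u2 (-1) t x.1 x.2
          - (x.2 - 0) / rho 1 0 0 x.1 x.2 * flS2 u1 u2 (-1) t x.1 x.2)
      - 2 * (1 + (-1)) * C.χ (t + rho 1 0 0 x.1 x.2) *
          (pt u1 t x.1 x.2 * pt u2 t x.1 x.2) ^ 2) = 0 := by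
    intro t ht
    have : ∀ x : ℝ × ℝ,
        C.χ' (t + rho 1 0 0 x.1 x.2) *
          (densS u1 u2 (-1) t x.1 x.2
            - (x.1 - 0) / rho 1 0 0 x.1 x.2 * flS1 u1 u2 (-1) t x.1 x.2
            - (x.2 - 0) / rho 1 0 0 x.1 x.2 * flS2 u1 u2 (-1) t x.1 x.2)
        - 2 * (1 + (-1)) * C.χ (t + rho 1 0 0 x.1 x.2) *
            (pt u1 t x.1 x.2 * pt u2 t x.1 x.2) ^ 2 = 0 := by
      intro x
      by_cases hχ' : C.χ' (t + rho 1 0 0 x.1 x.2) = 0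
      · rw [hχ']; ring
      · have haa : R + 2 * T + 2 ≤ t + rho 1 0 0 x.1 x.2 := by
          by_contra hlt
          exact hχ' (C.deriv_zero _ (Or.inl (not_le.1 hlt)))
        have hr2 : R + t < r2 x.1 x.2 := by
          have := r2_ge_rho_sub_one x.1 x.2
          have htT := ht.2
          linarith
        obtain ⟨hd, hf1', hf2', _, _⟩ := hsix t x.1 x.2 ht.1.le hr2
        rw [hd, hf1', hf2']; ring
    rw [show (fun x : ℝ × ℝ =>
        C.χ' (t + rho 1 0 0 x.1 x.2) *
          (densS u1 u2 (-1) t x.1 x.2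
            - (x.1 - 0) / rho 1 0 0 x.1 x.2 * flS1 u1 u2 (-1) t x.1 x.2
            - (x.2 - 0) / rho 1 0 0 x.1 x.2 * flS2 u1 u2 (-1) t x.1 x.2)
        - 2 * (1 + (-1)) * C.χ (t + rho 1 0 0 x.1 x.2) *
            (pt u1 t x.1 x.2 * pt u2 t x.1 x.2) ^ 2) = fun _ => (0:ℝ) from funext this]
    exact integral_zero _ _
  -- I is constant on [0, T]
  have hIT : I T = I 0 := by
    have hdiff : ∀ t ∈ interior (Set.Icc (0:ℝ) T), DifferentiableAt ℝ I t := by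
      intro t ht
      rw [interior_Icc] at ht
      exact (main_hasDerivAt hu (-1) C one_pos ht.1).differentiableAt
    have hderiv0 : ∀ t ∈ interior (Set.Icc (0:ℝ) T), deriv I t = 0 := by
      intro t ht
      rw [interior_Icc] at ht
      rw [(main_hasDerivAt hu (-1) C one_pos ht.1).deriv]
      exact hJzero t ht
    have hmono := monotoneOn_of_deriv_nonneg (convex_Icc 0 T) hcont.continuousOn
      (fun t ht => (hdiff t ht).differentiableWithinAt)
      (fun t ht => le_of_eq (hderiv0 t ht).symm)
    have hanti := antitoneOn_of_deriv_nonpos (convex_Icc 0 T) hcont.continuousOn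
      (fun t ht => (hdiff t ht).differentiableWithinAt)
      (fun t ht => le_of_eq (hderiv0 t ht))
    exact le_antisymm
      (hanti (Set.left_mem_Icc.2 hT) (Set.right_mem_Icc.2 hT) hT)
      (hmono (Set.left_mem_Icc.2 hT) (Set.right_mem_Icc.2 hT) hT)
  -- identify I with twice the energy difference
  have hIN : ∀ t : ℝ, 0 ≤ t → t ≤ T →
      I t = 2 * (energySq u1 t - energySq u2 t) := by
    intro t ht htT
    have hpt : ∀ x : ℝ × ℝ,
        C.χ (t + rho 1 0 0 x.1 x.2) * densS u1 u2 (-1) t x.1 x.2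
          = qd u1 t x.1 x.2 - qd u2 t x.1 x.2 := by
      intro x
      by_cases hx : R + t < r2 x.1 x.2
      · obtain ⟨hd, _, _, hq1, hq2⟩ := hsix t x.1 x.2 ht hx
        rw [hd, hq1, hq2]; ring
      · have hone : C.χ (t + rho 1 0 0 x.1 x.2) = 1 := by
          apply C.one
          have h1 := rho_le_one_add_r2 x.1 x.2
          rw [not_lt] at hx
          linarith
        rw [hone]
        simp only [densS]
        ring
    have hvan1 : ∀ x1 x2 : ℝ, R + t < r2 x1 x2 → qd u1 t x1 x2 = 0 :=
      fun x1 x2 hx => (hsix t x1 x2 ht hx).2.2.2.1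
    have hvan2 : ∀ x1 x2 : ℝ, R + t < r2 x1 x2 → qd u2 t x1 x2 = 0 :=
      fun x1 x2 hx => (hsix t x1 x2 ht hx).2.2.2.2
    have hint1 := qd_integrable hu.smooth1 (R := R) (t := t) hvan1
    have hint2 := qd_integrable hu.smooth2 (R := R) (t := t) hvan2
    have e1 : I t = ∫ x : ℝ × ℝ, (qd u1 t x.1 x.2 - qd u2 t x.1 x.2) := by
      rw [hI]
      show (∫ x : ℝ × ℝ, C.χ (t + rho 1 0 0 x.1 x.2) * densS u1 u2 (-1) t x.1 x.2) = _
      rw [show (fun x : ℝ × ℝ => C.χ (t + rho 1 0 0 x.1 x.2) * densS u1 u2 (-1) t x.1 x.2)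
          = fun x : ℝ × ℝ => qd u1 t x.1 x.2 - qd u2 t x.1 x.2 from funext hpt]
    have e2 : energySq u1 t = (1/2) * ∫ x : ℝ × ℝ, qd u1 t x.1 x.2 := by
      rw [energySq]
      congr 1
      apply integral_congr_ae (Filter.EventuallyEq.of_eq (funext fun x => ?_))
      simp only [qd]; ring
    have e3 : energySq u2 t = (1/2) * ∫ x : ℝ × ℝ, qd u2 t x.1 x.2 := by
      rw [energySq]
      congr 1
      apply integral_congr_ae (Filter.EventuallyEq.of_eq (funext fun x => ?_))
      simp only [qd]; ring
    rw [e1, integral_sub hint1 hint2, e2, e3]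
    ring
  have h1 := hIN T hT le_rfl
  have h2 := hIN 0 le_rfl hT
  rw [hIT, h2] at h1
  linarith

end Step2
end NB
/-- if the initial energies differ, not both energies decay to zero. -/
theorem not_both_energies_decay (ε : ℝ) (hε : 0 < ε) (f1 f2 g1 g2 : ℝ → ℝ → ℝ)
    (hf1 : SmoothCompact2 f1) (hf2 : SmoothCompact2 f2)
    (hg1 : SmoothCompact2 g1) (hg2 : SmoothCompact2 g2)
    (u1 u2 : ℝ → ℝ → ℝ → ℝ) (hu : IsSolution ε f1 f2 g1 g2 u1 u2)
    (hne : energyNorm u1 0 ≠ energyNorm u2 0) :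
    ¬ (Tendsto (fun t => energyNorm u1 t) atTop (nhds 0) ∧
        Tendsto (fun t => energyNorm u2 t) atTop (nhds 0)) := by
  rintro ⟨h1, h2⟩
  have hE : ∀ (u : ℝ → ℝ → ℝ → ℝ) (t : ℝ), 0 ≤ energySq u t := by
    intro u t
    apply mul_nonneg (by norm_num)
    apply MeasureTheory.integral_nonneg
    intro x
    positivity
  have hsq : ∀ (u : ℝ → ℝ → ℝ → ℝ) (t : ℝ), energySq u t = (energyNorm u t) ^ 2 :=
    fun u t => (Real.sq_sqrt (hE u t)).symm
  have hconst := NB.energy_diff_const hu hf1 hf2 hg1 hg2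
  have hN : Tendsto (fun t => energySq u1 t - energySq u2 t) atTop (nhds 0) := by
    have h := (h1.pow 2).sub (h2.pow 2)
    simp only [hsq]
    simpa using h
  have hc0 : energySq u1 0 - energySq u2 0 = 0 := by
    have hev : (fun t => energySq u1 t - energySq u2 t)
        =ᶠ[atTop] fun _ => energySq u1 0 - energySq u2 0 :=
      (eventually_ge_atTop (0:ℝ)).mono fun t ht => hconst t ht
    exact (tendsto_nhds_unique (hN.congr' hev) tendsto_const_nhds).symm
  apply hne
  have heq : energySq u1 0 = energySq u2 0 := by linarith
  rw [energyNorm, energyNorm, heq]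

end
end

section
/- Let φ₀, φ₁ ∈ C₀^∞(ℝ²). There is a constant C = C(φ₀,φ₁) > 0 such that |∂_σF₀[φ₀,φ₁](σ,ω)| ≤ C⟨σ⟩^{−3/2} for all (σ,ω) ∈ ℝ×S¹. -/
open Real MeasureTheory Filter Topology

noncomputable section

namespace RFD

def unc (f : ℝ → ℝ → ℝ) : ℝ × ℝ → ℝ := fun p => f p.1 p.2

def dd (ω1 ω2 : ℝ) (f : ℝ → ℝ → ℝ) : ℝ → ℝ → ℝ :=
  fun x y => fderiv ℝ (unc f) (x, y) (ω1, ω2)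

structure Nice (R M : ℝ) (f : ℝ → ℝ → ℝ) : Prop where
  cont : Continuous (unc f)
  vanish : ∀ x y : ℝ, R^2 ≤ x^2 + y^2 → f x y = 0
  bound : ∀ x y : ℝ, |f x y| ≤ M

structure Nice1 (R M : ℝ) (G : ℝ → ℝ) : Prop where
  cont : Continuous G
  vanish : ∀ s : ℝ, R ≤ |s| → G s = 0
  bound : ∀ s : ℝ, |G s| ≤ M

theorem dd_contDiff {f : ℝ → ℝ → ℝ} (hf : ContDiff ℝ (⊤:ℕ∞) (unc f)) (ω1 ω2 : ℝ) :
    ContDiff ℝ (⊤:ℕ∞) (unc (dd ω1 ω2 f)) := by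
  have : unc (dd ω1 ω2 f) = fun p : ℝ × ℝ => fderiv ℝ (unc f) p (ω1, ω2) := by
    funext p; rfl
  rw [this]
  exact (hf.fderiv_right (le_refl _)).clm_apply contDiff_const

theorem dd_support {f : ℝ → ℝ → ℝ} (ω1 ω2 : ℝ) :
    Function.support (unc (dd ω1 ω2 f)) ⊆ tsupport (unc f) := by
  intro p hp
  apply support_fderiv_subset ℝ (f := unc f)
  intro h0
  apply hp
  show fderiv ℝ (unc f) (p.1, p.2) (ω1, ω2) = 0
  simp only [Prod.mk.eta, h0, ContinuousLinearMap.zero_apply]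

theorem dd_vanish {f : ℝ → ℝ → ℝ} {K : Set (ℝ × ℝ)} (hK : tsupport (unc f) ⊆ K)
    (ω1 ω2 : ℝ) {x y : ℝ} (hxy : (x, y) ∉ K) : dd ω1 ω2 f x y = 0 := by
  by_contra h
  exact hxy (hK (dd_support ω1 ω2 (f := f) h))

theorem dd_tsupport {f : ℝ → ℝ → ℝ} (ω1 ω2 : ℝ) :
    tsupport (unc (dd ω1 ω2 f)) ⊆ tsupport (unc f) :=
  closure_minimal (dd_support ω1 ω2) isClosed_closure

theorem dd_compactSupport {f : ℝ → ℝ → ℝ} (hf : HasCompactSupport (unc f)) (ω1 ω2 : ℝ) :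
    HasCompactSupport (unc (dd ω1 ω2 f)) :=
  IsCompact.of_isClosed_subset hf (isClosed_tsupport _) (dd_tsupport ω1 ω2)

/-- first-order uniform bound -/
theorem dd_bound1 {f : ℝ → ℝ → ℝ} {ω1 ω2 : ℝ} (hω : ω1^2 + ω2^2 = 1) (x y : ℝ) :
    |dd ω1 ω2 f x y| ≤ ‖fderiv ℝ (unc f) (x, y)‖ := by
  have hv : ‖(ω1, ω2)‖ ≤ 1 := by
    rw [Prod.norm_def]
    have h1 : ω1^2 ≤ 1 := by nlinarith [sq_nonneg ω1, sq_nonneg ω2]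
    have h2 : ω2^2 ≤ 1 := by nlinarith [sq_nonneg ω1, sq_nonneg ω2]
    have := abs_le_one_iff_mul_self_le_one.2 (by nlinarith : ω1 * ω1 ≤ 1)
    have := abs_le_one_iff_mul_self_le_one.2 (by nlinarith : ω2 * ω2 ≤ 1)
    simp only [Real.norm_eq_abs, sup_le_iff]; constructor <;> assumption
  calc |dd ω1 ω2 f x y| ≤ ‖fderiv ℝ (unc f) (x, y)‖ * ‖(ω1, ω2)‖ :=
        (fderiv ℝ (unc f) (x, y)).le_opNorm _
    _ ≤ ‖fderiv ℝ (unc f) (x, y)‖ * 1 := by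
        exact mul_le_mul_of_nonneg_left hv (norm_nonneg _)
    _ = _ := mul_one _

end RFD
namespace RFD
theorem norm_omega_le {ω1 ω2 : ℝ} (hω : ω1^2 + ω2^2 = 1) : ‖((ω1, ω2) : ℝ × ℝ)‖ ≤ 1 := by
  rw [Prod.norm_def]
  have := abs_le_one_iff_mul_self_le_one.2 (by nlinarith [sq_nonneg ω1, sq_nonneg ω2] : ω1 * ω1 ≤ 1)
  have := abs_le_one_iff_mul_self_le_one.2 (by nlinarith [sq_nonneg ω1, sq_nonneg ω2] : ω2 * ω2 ≤ 1)
  simp only [Real.norm_eq_abs, sup_le_iff]; constructor <;> assumption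

/-- second-order uniform bound -/
theorem dd_bound2 {f : ℝ → ℝ → ℝ} (hf : ContDiff ℝ (⊤:ℕ∞) (unc f)) {ω1 ω2 : ℝ}
    (hω : ω1^2 + ω2^2 = 1) (x y : ℝ) :
    |dd ω1 ω2 (dd ω1 ω2 f) x y| ≤ ‖fderiv ℝ (fderiv ℝ (unc f)) (x, y)‖ := by
  set v : ℝ × ℝ := (ω1, ω2) with hv
  set G := fderiv ℝ (unc f) with hG
  have hGd : DifferentiableAt ℝ G (x, y) :=
    ((hf.fderiv_right (m := (⊤:ℕ∞)) (by simp)).differentiable (by simp)) (x, y)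
  have key : dd ω1 ω2 (dd ω1 ω2 f) x y = (fderiv ℝ G (x, y) v) v := by
    have h1 : unc (dd ω1 ω2 f) = fun q : ℝ × ℝ => G q v := rfl
    show fderiv ℝ (unc (dd ω1 ω2 f)) (x, y) v = _
    rw [h1, fderiv_clm_apply hGd (differentiableAt_const v)]
    simp
  rw [key]
  have h1 : |(fderiv ℝ G (x, y) v) v| ≤ ‖fderiv ℝ G (x, y) v‖ * ‖v‖ :=
    (fderiv ℝ G (x, y) v).le_opNorm v
  have h2 : ‖fderiv ℝ G (x, y) v‖ ≤ ‖fderiv ℝ G (x, y)‖ * ‖v‖ :=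
    (fderiv ℝ G (x, y)).le_opNorm v
  have hv1 : ‖v‖ ≤ 1 := norm_omega_le hω
  have hn : (0:ℝ) ≤ ‖fderiv ℝ G (x, y)‖ := ContinuousLinearMap.opNorm_nonneg _
  nlinarith [norm_nonneg (fderiv ℝ G (x, y) v), norm_nonneg v, abs_nonneg ((fderiv ℝ G (x, y) v) v)]
end RFD

namespace RFD

section RlineSec
variable {ω1 ω2 : ℝ} {R M : ℝ} {f : ℝ → ℝ → ℝ}

theorem path_sq (hω : ω1^2 + ω2^2 = 1) (s τ : ℝ) :
    (s*ω1 - τ*ω2)^2 + (s*ω2 + τ*ω1)^2 = s^2 + τ^2 := by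
  linear_combination (s^2 + τ^2) * hω

theorem integrand_vanish (hω : ω1^2 + ω2^2 = 1) (hf : Nice R M f) (hR : 0 ≤ R)
    {s τ : ℝ} (h : R ≤ |τ| ∨ R ≤ |s|) :
    f (s*ω1 - τ*ω2) (s*ω2 + τ*ω1) = 0 := by
  apply hf.vanish
  rw [path_sq hω]
  rcases h with h | h
  · have : R^2 ≤ τ^2 := by nlinarith [abs_nonneg τ, sq_abs τ]
    nlinarith [sq_nonneg s]
  · have : R^2 ≤ s^2 := by nlinarith [abs_nonneg s, sq_abs s]
    nlinarith [sq_nonneg τ]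

theorem integrand_integrable (hω : ω1^2 + ω2^2 = 1) (hf : Nice R M f) (hR : 0 ≤ R) (s : ℝ) :
    Integrable (fun τ => f (s*ω1 - τ*ω2) (s*ω2 + τ*ω1)) := by
  have hp : Continuous (fun τ : ℝ => ((s*ω1 - τ*ω2, s*ω2 + τ*ω1) : ℝ × ℝ)) := by fun_prop
  have hcont : Continuous (fun τ : ℝ => f (s*ω1 - τ*ω2) (s*ω2 + τ*ω1)) := hf.cont.comp hp
  apply hcont.integrable_of_hasCompactSupport
  apply HasCompactSupport.intro (isCompact_Icc (a := -R) (b := R))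
  intro τ hτ
  apply integrand_vanish hω hf hR
  left
  rcases not_and_or.1 (fun h => hτ ⟨h.1, h.2⟩ : ¬(-R ≤ τ ∧ τ ≤ R)) with h | h
  · rw [abs_of_nonpos (by linarith [not_le.1 h] : τ ≤ 0)]; linarith [not_le.1 h]
  · rw [abs_of_nonneg (by linarith [not_le.1 h] : 0 ≤ τ)]; linarith [not_le.1 h]

theorem Rline_bound (hω : ω1^2 + ω2^2 = 1) (hf : Nice R M f) (hR : 0 ≤ R) (s : ℝ) :
    |Rline f s ω1 ω2| ≤ 2 * R * M := by
  have hM : 0 ≤ M := le_trans (abs_nonneg _) (hf.bound 0 0)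
  have h1 : |Rline f s ω1 ω2| ≤ ∫ τ : ℝ, (Set.Icc (-R) R).indicator (fun _ => M) τ := by
    rw [← Real.norm_eq_abs]
    apply norm_integral_le_of_norm_le
    · exact (integrable_indicator_iff measurableSet_Icc).2
        (integrableOn_const measure_Icc_lt_top.ne)
    · filter_upwards with τ
      by_cases hτ : τ ∈ Set.Icc (-R) R
      · rw [Set.indicator_of_mem hτ, Real.norm_eq_abs]
        exact hf.bound _ _
      · rw [Set.indicator_of_notMem hτ]
        rw [Real.norm_eq_abs, integrand_vanish hω hf hR (Or.inl ?_), abs_zero]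
        rcases not_and_or.1 (fun h => hτ ⟨h.1, h.2⟩ : ¬(-R ≤ τ ∧ τ ≤ R)) with h | h
        · rw [abs_of_nonpos (by linarith [not_le.1 h] : τ ≤ 0)]; linarith [not_le.1 h]
        · rw [abs_of_nonneg (by linarith [not_le.1 h] : 0 ≤ τ)]; linarith [not_le.1 h]
  calc |Rline f s ω1 ω2| ≤ ∫ τ : ℝ, (Set.Icc (-R) R).indicator (fun _ => M) τ := h1
    _ = (volume (Set.Icc (-R) R)).toReal * M := by
        rw [integral_indicator measurableSet_Icc]
        simp [Measure.restrict_apply]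
        left; rw [ENNReal.toReal_ofReal (by linarith), max_eq_left (by linarith)]
    _ ≤ 2 * R * M := by
        rw [Real.volume_Icc]
        rw [ENNReal.toReal_ofReal (by linarith)]
        nlinarith

theorem Rline_vanish (hω : ω1^2 + ω2^2 = 1) (hf : Nice R M f) (hR : 0 ≤ R)
    {s : ℝ} (hs : R ≤ |s|) : Rline f s ω1 ω2 = 0 := by
  have hz : (fun τ : ℝ => f (s*ω1 - τ*ω2) (s*ω2 + τ*ω1)) = fun _ => 0 := by
    funext τ
    exact integrand_vanish hω hf hR (Or.inr hs)
  unfold Rline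
  rw [hz]
  simp

theorem Rline_hasDerivAt {M' : ℝ} (hω : ω1^2 + ω2^2 = 1)
    (hf_cd : ContDiff ℝ (⊤:ℕ∞) (unc f)) (hfN : Nice R M f)
    (hdN : Nice R M' (dd ω1 ω2 f)) (hR : 0 ≤ R) (s₀ : ℝ) :
    HasDerivAt (fun s => Rline f s ω1 ω2) (Rline (dd ω1 ω2 f) s₀ ω1 ω2) s₀ := by
  have hM' : 0 ≤ M' := le_trans (abs_nonneg _) (hdN.bound 0 0)
  have key := hasDerivAt_integral_of_dominated_loc_of_deriv_le (μ := volume) (x₀ := s₀)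
      (F := fun s τ => f (s*ω1 - τ*ω2) (s*ω2 + τ*ω1))
      (F' := fun s τ => dd ω1 ω2 f (s*ω1 - τ*ω2) (s*ω2 + τ*ω1))
      (bound := fun τ => (Set.Icc (-R) R).indicator (fun _ => M') τ)
      (s := Metric.ball s₀ 1) (Metric.ball_mem_nhds s₀ one_pos) ?_ ?_ ?_ ?_ ?_ ?_
  · exact key.2
  · filter_upwards with s
    have hp : Continuous (fun τ : ℝ => ((s*ω1 - τ*ω2, s*ω2 + τ*ω1) : ℝ × ℝ)) := by fun_prop
    exact (hfN.cont.comp hp).aestronglyMeasurable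
  · exact integrand_integrable hω hfN hR s₀
  · have hp : Continuous (fun τ : ℝ => ((s₀*ω1 - τ*ω2, s₀*ω2 + τ*ω1) : ℝ × ℝ)) := by fun_prop
    exact (hdN.cont.comp hp).aestronglyMeasurable
  · filter_upwards with τ
    intro s _
    by_cases hτ : τ ∈ Set.Icc (-R) R
    · rw [Set.indicator_of_mem hτ, Real.norm_eq_abs]
      exact hdN.bound _ _
    · rw [Set.indicator_of_notMem hτ, Real.norm_eq_abs,
        integrand_vanish hω hdN hR (Or.inl ?_), abs_zero]
      rcases not_and_or.1 (fun h => hτ ⟨h.1, h.2⟩ : ¬(-R ≤ τ ∧ τ ≤ R)) with h | h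
      · rw [abs_of_nonpos (by linarith [not_le.1 h] : τ ≤ 0)]; linarith [not_le.1 h]
      · rw [abs_of_nonneg (by linarith [not_le.1 h] : 0 ≤ τ)]; linarith [not_le.1 h]
  · exact (integrable_indicator_iff measurableSet_Icc).2
      (integrableOn_const measure_Icc_lt_top.ne)
  · filter_upwards with τ
    intro s _
    have h1 : HasDerivAt (fun s : ℝ => s*ω1 - τ*ω2) ω1 s := by
      simpa using ((hasDerivAt_id s).mul_const ω1).sub_const (τ*ω2)
    have h2 : HasDerivAt (fun s : ℝ => s*ω2 + τ*ω1) ω2 s := by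
      simpa using ((hasDerivAt_id s).mul_const ω2).add_const (τ*ω1)
    have hpath : HasDerivAt (fun s : ℝ => ((s*ω1 - τ*ω2, s*ω2 + τ*ω1) : ℝ × ℝ))
        ((ω1, ω2) : ℝ × ℝ) s := h1.prodMk h2
    have hF : HasFDerivAt (unc f)
        (fderiv ℝ (unc f) ((s*ω1 - τ*ω2, s*ω2 + τ*ω1) : ℝ × ℝ))
        ((s*ω1 - τ*ω2, s*ω2 + τ*ω1) : ℝ × ℝ) :=
      ((hf_cd.differentiable (by simp)) _).hasFDerivAt
    exact hF.comp_hasDerivAt s hpath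

theorem Rline_continuous {M' : ℝ} (hω : ω1^2 + ω2^2 = 1)
    (hf_cd : ContDiff ℝ (⊤:ℕ∞) (unc f)) (hfN : Nice R M f)
    (hdN : Nice R M' (dd ω1 ω2 f)) (hR : 0 ≤ R) :
    Continuous (fun s => Rline f s ω1 ω2) := by
  rw [continuous_iff_continuousAt]
  intro s
  exact (Rline_hasDerivAt hω hf_cd hfN hdN hR s).continuousAt

end RlineSec
end RFD

namespace RFD

/-- Change of variables `s = σ + r²`. -/
theorem cov (G : ℝ → ℝ) (σ : ℝ) :
    ∫ s in Set.Ioi σ, G s / Real.sqrt (s - σ) = ∫ r in Set.Ioi (0:ℝ), 2 * G (σ + r^2) := by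
  have himg : (fun r : ℝ => σ + r^2) '' Set.Ioi 0 = Set.Ioi σ := by
    ext s
    constructor
    · rintro ⟨r, hr, rfl⟩
      have : 0 < r := hr
      simp only [Set.mem_Ioi]
      nlinarith
    · intro hs
      refine ⟨Real.sqrt (s - σ), ?_, ?_⟩
      · exact Real.sqrt_pos.2 (by simp only [Set.mem_Ioi] at hs; linarith)
      · show σ + Real.sqrt (s - σ) ^ 2 = s
        rw [Real.sq_sqrt (by simp only [Set.mem_Ioi] at hs; linarith)]
        ring
  have hderiv : ∀ r ∈ Set.Ioi (0:ℝ),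
      HasDerivWithinAt (fun r : ℝ => σ + r^2) (2*r) (Set.Ioi 0) r := by
    intro r _
    have : HasDerivAt (fun r : ℝ => σ + r^2) (2*r) r := by
      simpa [mul_comm] using (hasDerivAt_pow 2 r).const_add σ
    exact this.hasDerivWithinAt
  have hinj : Set.InjOn (fun r : ℝ => σ + r^2) (Set.Ioi 0) := by
    intro a ha b hb hab
    simp only [Set.mem_Ioi] at ha hb
    simp only [add_right_inj] at hab
    nlinarith [sq_nonneg (a - b), sq_nonneg (a + b)]
  have := MeasureTheory.integral_image_eq_integral_abs_deriv_smul measurableSet_Ioi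
      hderiv hinj (fun s => G s / Real.sqrt (s - σ))
  rw [himg] at this
  rw [this]
  apply MeasureTheory.setIntegral_congr_fun measurableSet_Ioi
  intro r hr
  have hr0 : 0 < r := hr
  have h1 : Real.sqrt (σ + r^2 - σ) = r := by
    rw [show σ + r^2 - σ = r^2 by ring, Real.sqrt_sq hr0.le]
  simp only [smul_eq_mul, abs_of_pos (by linarith : (0:ℝ) < 2*r), h1]
  field_simp

/-- Integrability of `r ↦ G(σ+r²)` on `(0,∞)`. -/
theorem cov_integrable {R M : ℝ} {G : ℝ → ℝ} (hG : Nice1 R M G) (σ : ℝ) :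
    IntegrableOn (fun r : ℝ => G (σ + r^2)) (Set.Ioi 0) := by
  set B := Real.sqrt (|R| + |σ|) with hB
  have hM : 0 ≤ M := le_trans (abs_nonneg _) (hG.bound 0)
  apply Integrable.mono' (g := fun r => (Set.Ioc 0 B).indicator (fun _ => M) r)
  · exact ((integrable_indicator_iff measurableSet_Ioc).2
      (integrableOn_const measure_Ioc_lt_top.ne)).restrict
  · exact (hG.cont.comp (by fun_prop)).aestronglyMeasurable
  · rw [ae_restrict_iff' measurableSet_Ioi]
    filter_upwards with r hr
    have hr0 : 0 < r := hr
    by_cases hrB : r ≤ B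
    · rw [Set.indicator_of_mem (Set.mem_Ioc.2 ⟨hr0, hrB⟩), Real.norm_eq_abs]
      exact hG.bound _
    · rw [Set.indicator_of_notMem (fun hmem => hrB hmem.2)]
      rw [Real.norm_eq_abs, hG.vanish _ ?_, abs_zero]
      push_neg at hrB
      have hB2 : B^2 = |R| + |σ| := Real.sq_sqrt (by positivity)
      have : |R| + |σ| < r^2 := by nlinarith [Real.sqrt_nonneg (|R| + |σ|)]
      rw [abs_of_nonneg (by nlinarith [abs_nonneg σ, neg_abs_le σ, abs_nonneg R] : (0:ℝ) ≤ σ + r^2)]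
      calc R ≤ |R| := le_abs_self R
        _ ≤ σ + r^2 := by nlinarith [neg_abs_le σ]

end RFD

namespace RFD

theorem cov_hasDerivAt {R M M' : ℝ} {G G' : ℝ → ℝ} (hG : Nice1 R M G) (hG' : Nice1 R M' G')
    (hd : ∀ s, HasDerivAt G (G' s) s) (σ₀ : ℝ) :
    HasDerivAt (fun σ => ∫ r in Set.Ioi (0:ℝ), 2 * G (σ + r^2))
      (∫ r in Set.Ioi (0:ℝ), 2 * G' (σ₀ + r^2)) σ₀ := by
  have hM' : 0 ≤ M' := le_trans (abs_nonneg _) (hG'.bound 0)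
  set B : ℝ := Real.sqrt (|R| + |σ₀| + 1) with hBdef
  have hB2 : B^2 = |R| + |σ₀| + 1 := Real.sq_sqrt (by positivity)
  have key := hasDerivAt_integral_of_dominated_loc_of_deriv_le
      (μ := volume.restrict (Set.Ioi (0:ℝ))) (x₀ := σ₀)
      (F := fun σ r => 2 * G (σ + r^2))
      (F' := fun σ r => 2 * G' (σ + r^2))
      (bound := fun r => (Set.Ioc 0 B).indicator (fun _ => 2*M') r)
      (s := Metric.ball σ₀ 1) (Metric.ball_mem_nhds σ₀ one_pos) ?_ ?_ ?_ ?_ ?_ ?_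
  · exact key.2
  · filter_upwards with σ
    exact (continuous_const.mul
      (hG.cont.comp (by fun_prop : Continuous fun r : ℝ => σ + r^2))).aestronglyMeasurable
  · exact (cov_integrable hG σ₀).const_mul 2
  · exact (continuous_const.mul
      (hG'.cont.comp (by fun_prop : Continuous fun r : ℝ => σ₀ + r^2))).aestronglyMeasurable
  · rw [ae_restrict_iff' measurableSet_Ioi]
    filter_upwards with r hr σ hσ
    have hr0 : 0 < r := hr
    have hσ1 : |σ - σ₀| < 1 := by
      have := Metric.mem_ball.1 hσ
      rwa [Real.dist_eq] at this
    by_cases hrB : r ≤ B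
    · rw [Set.indicator_of_mem (Set.mem_Ioc.2 ⟨hr0, hrB⟩), Real.norm_eq_abs, abs_mul]
      have := hG'.bound (σ + r^2)
      rw [abs_of_pos (by norm_num : (0:ℝ) < 2)]
      linarith
    · rw [Set.indicator_of_notMem (fun hmem => hrB hmem.2), Real.norm_eq_abs]
      push_neg at hrB
      have h1 : |R| + |σ₀| + 1 < r^2 := by nlinarith [Real.sqrt_nonneg (|R| + |σ₀| + 1)]
      have h2 : (0:ℝ) ≤ σ + r^2 := by
        nlinarith [abs_nonneg R, neg_abs_le σ₀, abs_sub_abs_le_abs_sub σ σ₀, neg_abs_le (σ - σ₀)]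
      have h3 : R ≤ |σ + r^2| := by
        rw [abs_of_nonneg h2]
        nlinarith [le_abs_self R, neg_abs_le σ₀, neg_abs_le (σ - σ₀)]
      rw [hG'.vanish _ h3]
      simp
  · exact ((integrable_indicator_iff measurableSet_Ioc).2
      (integrableOn_const measure_Ioc_lt_top.ne)).restrict
  · filter_upwards with r σ _
    have h1 : HasDerivAt (fun σ : ℝ => σ + r^2) 1 σ := (hasDerivAt_id σ).add_const (r^2)
    have h2 : HasDerivAt (fun σ : ℝ => G (σ + r^2)) (G' (σ + r^2)) σ := by
      have h3 := (hd (σ + r^2)).comp σ h1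
      rw [mul_one] at h3
      exact h3
    simpa using h2.const_mul 2

end RFD

namespace RFD

theorem inv_sqrt_diff_bound {A B m d : ℝ} (hm : 0 < m) (hA : m ≤ A) (hB : m ≤ B)
    (hd : |A - B| ≤ d) :
    |1/Real.sqrt A - 1/Real.sqrt B| ≤ d / (2*m*Real.sqrt m) := by
  have hA0 : 0 < A := lt_of_lt_of_le hm hA
  have hB0 : 0 < B := lt_of_lt_of_le hm hB
  set sA := Real.sqrt A with hsA
  set sB := Real.sqrt B with hsB
  set sm := Real.sqrt m with hsm
  have hsA0 : 0 < sA := Real.sqrt_pos.2 hA0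
  have hsB0 : 0 < sB := Real.sqrt_pos.2 hB0
  have hsm0 : 0 < sm := Real.sqrt_pos.2 hm
  have hA2 : sA^2 = A := Real.sq_sqrt hA0.le
  have hB2 : sB^2 = B := Real.sq_sqrt hB0.le
  have hm2 : sm^2 = m := Real.sq_sqrt hm.le
  have hmA : sm ≤ sA := Real.sqrt_le_sqrt hA
  have hmB : sm ≤ sB := Real.sqrt_le_sqrt hB
  have hden : (0:ℝ) < sA*sB*(sA+sB) := by positivity
  have hprod : (1/sA - 1/sB) * (sA*sB*(sA+sB)) = B - A := by
    have h1 : (1/sA - 1/sB) * (sA*sB*(sA+sB)) = (sB - sA)*(sA+sB) := by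
      field_simp
    rw [h1]
    linear_combination hB2 - hA2
  have habs : |1/sA - 1/sB| * (sA*sB*(sA+sB)) = |A - B| := by
    rw [← abs_of_pos hden, ← abs_mul, hprod, abs_sub_comm]
  have hge : 2*m*sm ≤ sA*sB*(sA+sB) := by nlinarith
  have h2m : (0:ℝ) < 2*m*sm := by positivity
  have h1 : |1/sA - 1/sB| * (2*m*sm) ≤ |A - B| := by
    calc |1/sA - 1/sB| * (2*m*sm) ≤ |1/sA - 1/sB| * (sA*sB*(sA+sB)) := by
          exact mul_le_mul_of_nonneg_left hge (abs_nonneg _)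
      _ = |A - B| := habs
  rw [le_div_iff₀ h2m]
  linarith

end RFD

namespace RFD

theorem jb_pos (σ : ℝ) : 0 < jb σ := Real.sqrt_pos.2 (by positivity)

theorem jb_ge_one (σ : ℝ) : 1 ≤ jb σ := by
  rw [show (1:ℝ) = Real.sqrt 1 by simp]
  exact Real.sqrt_le_sqrt (by nlinarith [sq_nonneg σ])

theorem jb_rpow (σ : ℝ) : jb σ ^ (-(3:ℝ)/2) = 1 / (jb σ * Real.sqrt (jb σ)) := by
  have h0 : 0 < jb σ := jb_pos σ
  have h32 : jb σ ^ ((3:ℝ)/2) = jb σ * Real.sqrt (jb σ) := by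
    rw [show (3:ℝ)/2 = 1 + 1/2 by norm_num, Real.rpow_add h0, Real.rpow_one,
      ← Real.sqrt_eq_rpow]
  rw [show (-(3:ℝ)/2) = -((3:ℝ)/2) by norm_num, Real.rpow_neg h0.le, h32]
  rw [one_div]

theorem jb_rpow_nonneg (σ : ℝ) : 0 ≤ jb σ ^ (-(3:ℝ)/2) := by
  have h1 := jb_pos σ
  have h2 : 0 < Real.sqrt (jb σ) := Real.sqrt_pos.2 h1
  rw [jb_rpow]
  positivity

theorem far_numeric {R M m J : ℝ} (hR : 1 ≤ R) (hM : 0 ≤ M) (hm : 0 < m) (hJ : 0 < J)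
    (hJm : J * Real.sqrt J ≤ 8 * (m * Real.sqrt m)) :
    M * ((R+1) / (2*m*Real.sqrt m)) * (2*R+1) ≤
      400*(M+1)*(R+1)^3 * (1/(J * Real.sqrt J)) := by
  have hsm : 0 < Real.sqrt m := Real.sqrt_pos.2 hm
  have hsJ : 0 < Real.sqrt J := Real.sqrt_pos.2 hJ
  have hu : 0 < m * Real.sqrt m := mul_pos hm hsm
  have hv : 0 < J * Real.sqrt J := mul_pos hJ hsJ
  have h1 : M * ((R+1)/(2*m*Real.sqrt m)) * (2*R+1)
      = (M*(R+1)*(2*R+1))/(2*(m*Real.sqrt m)) := by ring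
  have h2 : 400*(M+1)*(R+1)^3 * (1/(J * Real.sqrt J))
      = (400*(M+1)*(R+1)^3)/(J * Real.sqrt J) := by ring
  rw [h1, h2, div_le_div_iff₀ (by positivity) hv]
  have c1 : (0:ℝ) ≤ M*(R+1)*(2*R+1) := by positivity
  have step : M*(R+1)*(2*R+1)*(J * Real.sqrt J)
      ≤ M*(R+1)*(2*R+1)*(8*(m * Real.sqrt m)) :=
    mul_le_mul_of_nonneg_left hJm c1
  refine le_trans step ?_
  have k0 : (2*R+1) ≤ (R+1)^2 := by nlinarith
  have k1 : M*(2*R+1) ≤ (M+1)*(R+1)^2 := by nlinarith [mul_le_mul_of_nonneg_left k0 hM]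
  have k2 : M*(R+1)*(2*R+1)*8 ≤ 400*(M+1)*(R+1)^3*2 := by
    have h3 := mul_le_mul_of_nonneg_left k1 (by linarith : (0:ℝ) ≤ 8*(R+1))
    have h4 : (0:ℝ) ≤ (M+1)*(R+1)^3 := by positivity
    nlinarith [h3, h4]
  nlinarith [mul_le_mul_of_nonneg_right k2 hu.le]

set_option maxHeartbeats 1000000 in
/-- The heart of the matter: decay of `∫₀^∞ W'(σ+r²) dr`. -/
theorem key_estimate {R M : ℝ} {W W' : ℝ → ℝ} (hR : 1 ≤ R)
    (hd : ∀ s, HasDerivAt W (W' s) s)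
    (hWv : ∀ s : ℝ, R ≤ |s| → W s = 0)
    (hW' : Nice1 R M W') (σ : ℝ) :
    |∫ r in Set.Ioi (0:ℝ), 2 * W' (σ + r^2)| ≤
      400 * (M+1) * (R+1)^3 * jb σ ^ (-(3:ℝ)/2) := by
  have hM : 0 ≤ M := le_trans (abs_nonneg _) (hW'.bound 0)
  have hCpos : (0:ℝ) ≤ 400 * (M+1) * (R+1)^3 := by positivity
  rcases le_or_gt R σ with hcase | hcase
  · -- σ ≥ R : the integral vanishes
    have : ∫ r in Set.Ioi (0:ℝ), 2 * W' (σ + r^2) = 0 := by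
      apply setIntegral_eq_zero_of_forall_eq_zero
      intro r hr
      have hr0 : 0 < r := hr
      rw [hW'.vanish _ (by rw [abs_of_nonneg (by nlinarith : (0:ℝ) ≤ σ + r^2)]; nlinarith)]
      ring
    rw [this, abs_zero]
    exact mul_nonneg hCpos (jb_rpow_nonneg σ)
  rcases le_or_gt (-(7*R)) σ with hmid | hfar
  · -- middle region : -7R ≤ σ < R
    have hbd : |∫ r in Set.Ioi (0:ℝ), 2 * W' (σ + r^2)| ≤ 2*M*(3*R) := by
      rw [← Real.norm_eq_abs]
      have hle := norm_integral_le_of_norm_le (μ := volume.restrict (Set.Ioi (0:ℝ)))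
          (f := fun r => 2 * W' (σ + r^2))
          (g := fun r => (Set.Ioc 0 (3*R)).indicator (fun _ => 2*M) r)
          (((integrable_indicator_iff measurableSet_Ioc).2
            (integrableOn_const measure_Ioc_lt_top.ne)).restrict) ?_
      · refine le_trans hle ?_
        rw [integral_indicator measurableSet_Ioc, setIntegral_const,
          measureReal_restrict_apply measurableSet_Ioc,
          Set.inter_eq_left.2 (fun x hx => hx.1), Real.volume_real_Ioc_of_le (by linarith),
          smul_eq_mul]
        nlinarith
      · rw [ae_restrict_iff' measurableSet_Ioi]
        filter_upwards with r hr
        have hr0 : 0 < r := hr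
        by_cases hrB : r ≤ 3*R
        · rw [Set.indicator_of_mem (Set.mem_Ioc.2 ⟨hr0, hrB⟩), Real.norm_eq_abs, abs_mul,
            abs_of_pos (by norm_num : (0:ℝ) < 2)]
          have := hW'.bound (σ + r^2)
          linarith
        · rw [Set.indicator_of_notMem (fun hmem => hrB hmem.2), Real.norm_eq_abs]
          push_neg at hrB
          have h2 : R ≤ |σ + r^2| := by
            rw [abs_of_nonneg (by nlinarith : (0:ℝ) ≤ σ + r^2)]
            nlinarith
          rw [hW'.vanish _ h2]
          simp
    refine le_trans hbd ?_
    -- jb σ ≤ 8R hence jb^{3/2} ≤ 24R²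
    have hjb : jb σ ≤ 8*R := by
      rw [jb, show (8*R) = Real.sqrt ((8*R)^2) by rw [Real.sqrt_sq (by linarith)]]
      apply Real.sqrt_le_sqrt
      have haσ : |σ| ≤ 7*R := by
        rw [abs_le]; constructor <;> nlinarith
      nlinarith [sq_abs σ, abs_nonneg σ]
    have hsjb : Real.sqrt (jb σ) ≤ 3*R := by
      rw [show (3*R) = Real.sqrt ((3*R)^2) by rw [Real.sqrt_sq (by linarith)]]
      apply Real.sqrt_le_sqrt
      nlinarith
    have hprod : jb σ * Real.sqrt (jb σ) ≤ 24*R^2 := by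
      have h1 : 0 ≤ jb σ := (jb_pos σ).le
      nlinarith [Real.sqrt_nonneg (jb σ), jb_ge_one σ]
    rw [jb_rpow]
    have hs0 : 0 < Real.sqrt (jb σ) := Real.sqrt_pos.2 (jb_pos σ)
    have hjbs : 0 < jb σ * Real.sqrt (jb σ) := mul_pos (jb_pos σ) hs0
    rw [mul_one_div, le_div_iff₀ hjbs]
    have step1 : 2*M*(3*R) * (jb σ * Real.sqrt (jb σ)) ≤ 2*M*(3*R) * (24*R^2) :=
      mul_le_mul_of_nonneg_left hprod (by positivity)
    refine le_trans step1 ?_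
    have hR3 : R^3 ≤ (R+1)^3 := by nlinarith
    nlinarith [mul_le_mul_of_nonneg_left hR3 (by linarith : (0:ℝ) ≤ 144*M)]
  · -- far region : σ < -7R
    have hm0 : (0:ℝ) < -σ - R - 1 := by nlinarith
    set m : ℝ := -σ - R - 1 with hmdef
    set δ : ℝ := 1 / Real.sqrt (-σ) with hδdef
    set a : ℝ := -R - 1 with hadef
    set b : ℝ := R with hbdef
    have hab : a < b := by rw [hadef, hbdef]; nlinarith
    have hsm0 : 0 < Real.sqrt m := Real.sqrt_pos.2 hm0
    -- convert to the s-integral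
    rw [← cov W' σ]
    have hIoi : ∫ s in Set.Ioi σ, W' s / Real.sqrt (s - σ)
        = ∫ s : ℝ, W' s / Real.sqrt (s - σ) := by
      apply setIntegral_eq_integral_of_forall_compl_eq_zero
      intro s hs
      have hsσ : s ≤ σ := not_lt.1 hs
      rw [hW'.vanish s (by rw [abs_of_nonpos (by nlinarith)]; nlinarith), zero_div]
    have hsupp : Function.support (fun s => W' s / Real.sqrt (s - σ)) ⊆ Set.Ioc a b := by
      intro s hs
      have hWs : W' s ≠ 0 := by
        intro h
        apply hs
        show W' s / Real.sqrt (s - σ) = 0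
        rw [h, zero_div]
      have habs : ¬ (R ≤ |s|) := fun hc => hWs (hW'.vanish s hc)
      push_neg at habs
      rcases abs_lt.1 habs with ⟨h1, h2⟩
      exact ⟨by rw [hadef]; linarith, by rw [hbdef]; linarith⟩
    have hint : ∫ s : ℝ, W' s / Real.sqrt (s - σ)
        = ∫ s in a..b, W' s / Real.sqrt (s - σ) :=
      (intervalIntegral.integral_eq_integral_of_support_subset hsupp).symm
    rw [hIoi, hint]
    -- interval integrability
    have hKcont : ContinuousOn (fun s => W' s / Real.sqrt (s - σ)) (Set.uIcc a b) := by
      apply ContinuousOn.div (hW'.cont.continuousOn)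
      · exact (Real.continuous_sqrt.comp (continuous_id.sub continuous_const)).continuousOn
      · intro s hs
        rw [Set.uIcc_of_le hab.le] at hs
        have : a ≤ s := hs.1
        have hpos : 0 < s - σ := by rw [hadef] at this; nlinarith
        exact ne_of_gt (Real.sqrt_pos.2 hpos)
    have hIint1 : IntervalIntegrable (fun s => W' s / Real.sqrt (s - σ)) volume a b :=
      hKcont.intervalIntegrable
    have hIint2 : IntervalIntegrable W' volume a b :=
      hW'.cont.intervalIntegrable a b
    -- FTC : the integral of W' vanishes
    have hWa : W a = 0 := hWv a (by rw [hadef, abs_of_nonpos (by nlinarith)]; nlinarith)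
    have hWb : W b = 0 := hWv b (by rw [hbdef, abs_of_nonneg (by nlinarith)])
    have hFTC : ∫ s in a..b, W' s = 0 := by
      rw [intervalIntegral.integral_eq_sub_of_hasDerivAt (fun s _ => hd s) hIint2, hWa, hWb,
        sub_zero]
    -- split off the constant δ
    have hu : IntervalIntegrable (fun s => W' s * (1/Real.sqrt (s - σ) - δ)) volume a b := by
      have he : (fun s => W' s * (1/Real.sqrt (s - σ) - δ))
          = fun s => W' s / Real.sqrt (s - σ) - W' s * δ := by
        funext s; ring
      rw [he]
      exact hIint1.sub (hIint2.mul_const δ)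
    have hsplit : ∫ s in a..b, W' s / Real.sqrt (s - σ)
        = ∫ s in a..b, W' s * (1/Real.sqrt (s - σ) - δ) := by
      have he : (fun s => W' s / Real.sqrt (s - σ))
          = fun s => (W' s * (1/Real.sqrt (s - σ) - δ)) + W' s * δ := by
        funext s; ring
      rw [intervalIntegral.integral_congr (fun s _ => congrFun he s),
        intervalIntegral.integral_add hu (hIint2.mul_const δ),
        intervalIntegral.integral_mul_const, hFTC, zero_mul, add_zero]
    rw [hsplit]
    -- pointwise bound
    have hbar : ∀ s ∈ Set.uIoc a b,
        ‖W' s * (1/Real.sqrt (s - σ) - δ)‖ ≤ M * ((R+1) / (2*m*Real.sqrt m)) := by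
      intro s hs
      rw [Set.uIoc_of_le hab.le] at hs
      have hA : m ≤ s - σ := by
        have := hs.1
        rw [hadef] at this
        rw [hmdef]
        linarith
      have hB : m ≤ -σ := by rw [hmdef]; nlinarith
      have hsb : s ≤ R := by rw [hbdef] at hs; exact hs.2
      have hsa : -R - 1 < s := by rw [hadef] at hs; exact hs.1
      have hdval : |(s - σ) - (-σ)| ≤ R + 1 := by
        rw [show (s - σ) - (-σ) = s by ring]
        exact abs_le.2 ⟨by linarith, by linarith⟩
      have hdiff := inv_sqrt_diff_bound hm0 hA hB hdval
      rw [Real.norm_eq_abs, abs_mul, hδdef]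
      exact mul_le_mul (hW'.bound s) hdiff (abs_nonneg _) hM
    have hIbd : |∫ s in a..b, W' s * (1/Real.sqrt (s - σ) - δ)|
        ≤ (M * ((R+1) / (2*m*Real.sqrt m))) * |b - a| := by
      rw [← Real.norm_eq_abs]
      exact intervalIntegral.norm_integral_le_of_norm_le_const hbar
    refine le_trans hIbd ?_
    -- numerics
    have hba : |b - a| = 2*R + 1 := by
      rw [hadef, hbdef, abs_of_nonneg (by nlinarith)]
      ring
    rw [hba]
    have hjb4 : jb σ ≤ 4*m := by
      have h1 : jb σ ≤ 1 - σ := by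
        rw [jb, show (1:ℝ) - σ = Real.sqrt ((1 - σ)^2) by rw [Real.sqrt_sq (by nlinarith)]]
        apply Real.sqrt_le_sqrt
        nlinarith
      rw [hmdef]
      linarith
    have hsjb : Real.sqrt (jb σ) ≤ 2 * Real.sqrt m := by
      have h1 : Real.sqrt (jb σ) ≤ Real.sqrt (4*m) := Real.sqrt_le_sqrt hjb4
      rwa [show (4:ℝ)*m = 2^2*m by ring, Real.sqrt_mul (by positivity) m,
        Real.sqrt_sq (by norm_num : (0:ℝ) ≤ 2)] at h1
    have hjbprod : jb σ * Real.sqrt (jb σ) ≤ 8 * (m * Real.sqrt m) := by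
      calc jb σ * Real.sqrt (jb σ) ≤ (4*m) * (2*Real.sqrt m) :=
            mul_le_mul hjb4 hsjb (Real.sqrt_nonneg _) (by positivity)
        _ = 8 * (m * Real.sqrt m) := by ring
    rw [jb_rpow]
    exact far_numeric hR hM hm0 (jb_pos σ) hjbprod

end RFD

namespace RFD

theorem nice_exists {K : Set (ℝ × ℝ)} (hKc : IsCompact K) {R : ℝ}
    (hRK : ∀ x y : ℝ, R^2 ≤ x^2+y^2 → ((x,y) : ℝ × ℝ) ∉ K)
    {f : ℝ → ℝ → ℝ} (hf : Continuous (unc f)) (hsub : tsupport (unc f) ⊆ K) :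
    ∃ M, Nice R M f := by
  have hcs : HasCompactSupport (unc f) :=
    IsCompact.of_isClosed_subset hKc (isClosed_tsupport _) hsub
  obtain ⟨M, hM⟩ := hf.bounded_above_of_compact_support hcs
  refine ⟨M, hf, ?_, ?_⟩
  · intro x y h
    exact image_eq_zero_of_notMem_tsupport
      (fun hm => hRK x y h (hsub hm)) (f := unc f) (x := (x,y))
  · intro x y
    have := hM (x, y)
    rwa [Real.norm_eq_abs] at this

end RFD


/-- decay of the `σ`-derivative of the radiation field. -/
theorem radiation_field_decay (φ0 φ1 : ℝ → ℝ → ℝ)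
    (hφ0 : SmoothCompact2 φ0) (hφ1 : SmoothCompact2 φ1) :
    ∃ C : ℝ, 0 < C ∧
      ∀ σ ω1 ω2 : ℝ, ω1 ^ 2 + ω2 ^ 2 = 1 →
        |dF0 φ0 φ1 σ ω1 ω2| ≤ C * jb σ ^ (-(3 : ℝ) / 2) := by
  open RFD in
  obtain ⟨hcd0, hcs0⟩ := hφ0
  obtain ⟨hcd1, hcs1⟩ := hφ1
  have hcd0' : ContDiff ℝ (⊤:ℕ∞) (RFD.unc φ0) := hcd0
  have hcs0' : HasCompactSupport (RFD.unc φ0) := hcs0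
  have hcd1' : ContDiff ℝ (⊤:ℕ∞) (RFD.unc φ1) := hcd1
  have hcs1' : HasCompactSupport (RFD.unc φ1) := hcs1
  -- the compact set K and the radius R
  set K : Set (ℝ × ℝ) := tsupport (RFD.unc φ0) ∪ tsupport (RFD.unc φ1) with hKdef
  have hKc : IsCompact K := hcs0'.union hcs1'
  obtain ⟨r, hr⟩ := hKc.isBounded.subset_closedBall 0
  set R : ℝ := 2*|r| + 2 with hRdef
  have hR1 : 1 ≤ R := by have := abs_nonneg r; rw [hRdef]; linarith
  have hR0 : 0 ≤ R := by linarith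
  have hRK : ∀ x y : ℝ, R^2 ≤ x^2+y^2 → ((x,y) : ℝ × ℝ) ∉ K := by
    intro x y h hxy
    have hball := hr hxy
    rw [Metric.mem_closedBall, dist_zero_right, Prod.norm_def] at hball
    have hx : |x| ≤ r := le_trans (le_max_left _ _) hball
    have hy : |y| ≤ r := le_trans (le_max_right _ _) hball
    have hrr : r ≤ |r| := le_abs_self r
    rw [hRdef] at h
    nlinarith [sq_abs x, sq_abs y, abs_nonneg x, abs_nonneg y, abs_nonneg r]
  have ht0 : tsupport (RFD.unc φ0) ⊆ K := Set.subset_union_left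
  have hte0 : tsupport (RFD.unc φ1) ⊆ K := Set.subset_union_right
  -- uniform bounds for the first derivative of φ1 and second derivative of φ0
  have hGcd : ContDiff ℝ (⊤:ℕ∞) (fderiv ℝ (RFD.unc φ0)) := hcd0'.fderiv_right (by simp)
  obtain ⟨C2, hC2⟩ := (hGcd.fderiv_right (m := (⊤:ℕ∞)) (by simp)).continuous.bounded_above_of_compact_support
    ((hcs0'.fderiv ℝ).fderiv ℝ)
  obtain ⟨C1', hC1'⟩ := (hcd1'.fderiv_right (m := (⊤:ℕ∞)) (by simp)).continuous.bounded_above_of_compact_support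
    (hcs1'.fderiv ℝ)
  have hC2nn : 0 ≤ C2 := le_trans (norm_nonneg _) (hC2 0)
  have hC1'nn : 0 ≤ C1' := le_trans (norm_nonneg _) (hC1' 0)
  -- the constant
  set MW : ℝ := 2*R*C1' + 2*R*C2 with hMWdef
  have hMWnn : 0 ≤ MW := by positivity
  refine ⟨400 * (MW+1) * (R+1)^3, by positivity, ?_⟩
  intro σ ω1 ω2 hω
  -- the scaled directional derivatives
  set d1 := RFD.dd ω1 ω2 φ0 with hd1def
  set d2 := RFD.dd ω1 ω2 d1 with hd2def
  set d3 := RFD.dd ω1 ω2 d2 with hd3def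
  set e1 := RFD.dd ω1 ω2 φ1 with he1def
  set e2 := RFD.dd ω1 ω2 e1 with he2def
  have s1 : ContDiff ℝ (⊤:ℕ∞) (RFD.unc d1) := RFD.dd_contDiff hcd0' ω1 ω2
  have s2 : ContDiff ℝ (⊤:ℕ∞) (RFD.unc d2) := RFD.dd_contDiff s1 ω1 ω2
  have s3 : ContDiff ℝ (⊤:ℕ∞) (RFD.unc d3) := RFD.dd_contDiff s2 ω1 ω2
  have se1 : ContDiff ℝ (⊤:ℕ∞) (RFD.unc e1) := RFD.dd_contDiff hcd1' ω1 ω2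
  have se2 : ContDiff ℝ (⊤:ℕ∞) (RFD.unc e2) := RFD.dd_contDiff se1 ω1 ω2
  have t1 : tsupport (RFD.unc d1) ⊆ K := (RFD.dd_tsupport ω1 ω2).trans ht0
  have t2 : tsupport (RFD.unc d2) ⊆ K := (RFD.dd_tsupport ω1 ω2).trans t1
  have t3 : tsupport (RFD.unc d3) ⊆ K := (RFD.dd_tsupport ω1 ω2).trans t2
  have te1 : tsupport (RFD.unc e1) ⊆ K := (RFD.dd_tsupport ω1 ω2).trans hte0
  have te2 : tsupport (RFD.unc e2) ⊆ K := (RFD.dd_tsupport ω1 ω2).trans te1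
  -- Nice instances
  obtain ⟨M0, N0⟩ := RFD.nice_exists hKc hRK hcd0'.continuous ht0
  obtain ⟨M1, N1⟩ := RFD.nice_exists hKc hRK s1.continuous t1
  obtain ⟨M3, N3⟩ := RFD.nice_exists hKc hRK s3.continuous t3
  obtain ⟨Me0, Ne0⟩ := RFD.nice_exists hKc hRK hcd1'.continuous hte0
  obtain ⟨Me2, Ne2⟩ := RFD.nice_exists hKc hRK se2.continuous te2
  have N2 : RFD.Nice R C2 d2 := by
    refine ⟨s2.continuous, ?_, ?_⟩
    · intro x y h
      exact RFD.dd_vanish t1 ω1 ω2 (hRK x y h)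
    · intro x y
      exact (RFD.dd_bound2 hcd0' hω x y).trans (hC2 (x,y))
  have Ne1 : RFD.Nice R C1' e1 := by
    refine ⟨se1.continuous, ?_, ?_⟩
    · intro x y h
      exact RFD.dd_vanish hte0 ω1 ω2 (hRK x y h)
    · intro x y
      exact (RFD.dd_bound1 hω x y).trans (hC1' (x,y))
  -- one-dimensional functions and their properties
  have hd0 : ∀ s, HasDerivAt (fun s => Rline φ0 s ω1 ω2) (Rline d1 s ω1 ω2) s :=
    fun s => RFD.Rline_hasDerivAt hω hcd0' N0 N1 hR0 s
  have hd1 : ∀ s, HasDerivAt (fun s => Rline d1 s ω1 ω2) (Rline d2 s ω1 ω2) s :=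
    fun s => RFD.Rline_hasDerivAt hω s1 N1 N2 hR0 s
  have hde0 : ∀ s, HasDerivAt (fun s => Rline φ1 s ω1 ω2) (Rline e1 s ω1 ω2) s :=
    fun s => RFD.Rline_hasDerivAt hω hcd1' Ne0 Ne1 hR0 s
  have NG0 : RFD.Nice1 R (2*R*M0) (fun s => Rline φ0 s ω1 ω2) :=
    ⟨RFD.Rline_continuous hω hcd0' N0 N1 hR0,
     fun s hs => RFD.Rline_vanish hω N0 hR0 hs, fun s => RFD.Rline_bound hω N0 hR0 s⟩
  have NG1 : RFD.Nice1 R (2*R*M1) (fun s => Rline d1 s ω1 ω2) :=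
    ⟨RFD.Rline_continuous hω s1 N1 N2 hR0,
     fun s hs => RFD.Rline_vanish hω N1 hR0 hs, fun s => RFD.Rline_bound hω N1 hR0 s⟩
  have NG2 : RFD.Nice1 R (2*R*C2) (fun s => Rline d2 s ω1 ω2) :=
    ⟨RFD.Rline_continuous hω s2 N2 N3 hR0,
     fun s hs => RFD.Rline_vanish hω N2 hR0 hs, fun s => RFD.Rline_bound hω N2 hR0 s⟩
  have NH0 : RFD.Nice1 R (2*R*Me0) (fun s => Rline φ1 s ω1 ω2) :=
    ⟨RFD.Rline_continuous hω hcd1' Ne0 Ne1 hR0,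
     fun s hs => RFD.Rline_vanish hω Ne0 hR0 hs, fun s => RFD.Rline_bound hω Ne0 hR0 s⟩
  have NH1 : RFD.Nice1 R (2*R*C1') (fun s => Rline e1 s ω1 ω2) :=
    ⟨RFD.Rline_continuous hω se1 Ne1 Ne2 hR0,
     fun s hs => RFD.Rline_vanish hω Ne1 hR0 hs, fun s => RFD.Rline_bound hω Ne1 hR0 s⟩
  -- W and W'
  set W : ℝ → ℝ := fun s => Rline φ1 s ω1 ω2 - Rline d1 s ω1 ω2 with hWdef
  set W' : ℝ → ℝ := fun s => Rline e1 s ω1 ω2 - Rline d2 s ω1 ω2 with hW'def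
  have hWd : ∀ s, HasDerivAt W (W' s) s := fun s => (hde0 s).sub (hd1 s)
  have hWv : ∀ s : ℝ, R ≤ |s| → W s = 0 := by
    intro s hs
    show Rline φ1 s ω1 ω2 - Rline d1 s ω1 ω2 = 0
    rw [RFD.Rline_vanish hω Ne0 hR0 hs, RFD.Rline_vanish hω N1 hR0 hs, sub_zero]
  have NW' : RFD.Nice1 R MW W' := by
    refine ⟨NH1.cont.sub NG2.cont, ?_, ?_⟩
    · intro s hs
      show Rline e1 s ω1 ω2 - Rline d2 s ω1 ω2 = 0
      rw [RFD.Rline_vanish hω Ne1 hR0 hs, RFD.Rline_vanish hω N2 hR0 hs, sub_zero]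
    · intro s
      rw [hMWdef]
      calc |Rline e1 s ω1 ω2 - Rline d2 s ω1 ω2|
          ≤ |Rline e1 s ω1 ω2| + |Rline d2 s ω1 ω2| := abs_sub _ _
        _ ≤ 2*R*C1' + 2*R*C2 :=
            add_le_add (RFD.Rline_bound hω Ne1 hR0 s) (RFD.Rline_bound hω N2 hR0 s)
  -- identify dF0
  set c : ℝ := 1 / (2 * Real.sqrt 2 * Real.pi) with hcdef
  have hfun0 : (fun σ' => R2 φ0 σ' ω1 ω2)
      = fun σ' => c * ∫ r in Set.Ioi (0:ℝ), 2 * Rline φ0 (σ' + r^2) ω1 ω2 := by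
    funext σ'
    show c * _ = c * _
    rw [RFD.cov (fun s => Rline φ0 s ω1 ω2) σ']
  have hDR2 : ∀ σ', HasDerivAt (fun σ'' => R2 φ0 σ'' ω1 ω2)
      (c * ∫ r in Set.Ioi (0:ℝ), 2 * Rline d1 (σ' + r^2) ω1 ω2) σ' := by
    intro σ'
    rw [hfun0]
    exact (RFD.cov_hasDerivAt NG0 NG1 hd0 σ').const_mul c
  have hF0fun : (fun σ' => F0 φ0 φ1 σ' ω1 ω2)
      = fun σ' => -(c * ∫ r in Set.Ioi (0:ℝ), 2 * Rline d1 (σ' + r^2) ω1 ω2)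
          + c * ∫ r in Set.Ioi (0:ℝ), 2 * Rline φ1 (σ' + r^2) ω1 ω2 := by
    funext σ'
    show -deriv (fun σ'' => R2 φ0 σ'' ω1 ω2) σ' + R2 φ1 σ' ω1 ω2 = _
    rw [(hDR2 σ').deriv]
    congr 1
    show c * _ = c * _
    rw [RFD.cov (fun s => Rline φ1 s ω1 ω2) σ']
  have hDF : HasDerivAt (fun σ' => F0 φ0 φ1 σ' ω1 ω2)
      (-(c * ∫ r in Set.Ioi (0:ℝ), 2 * Rline d2 (σ + r^2) ω1 ω2)
        + c * ∫ r in Set.Ioi (0:ℝ), 2 * Rline e1 (σ + r^2) ω1 ω2) σ := by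
    rw [hF0fun]
    exact (((RFD.cov_hasDerivAt NG1 NG2 hd1 σ).const_mul c).neg).add
      ((RFD.cov_hasDerivAt NH0 NH1 hde0 σ).const_mul c)
  have hint2 : IntegrableOn (fun r : ℝ => 2 * Rline d2 (σ + r^2) ω1 ω2) (Set.Ioi 0) :=
    (RFD.cov_integrable NG2 σ).const_mul 2
  have hint1 : IntegrableOn (fun r : ℝ => 2 * Rline e1 (σ + r^2) ω1 ω2) (Set.Ioi 0) :=
    (RFD.cov_integrable NH1 σ).const_mul 2
  have hdFeq : dF0 φ0 φ1 σ ω1 ω2 = c * ∫ r in Set.Ioi (0:ℝ), 2 * W' (σ + r^2) := by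
    show deriv (fun σ' => F0 φ0 φ1 σ' ω1 ω2) σ = _
    rw [hDF.deriv]
    have hsub : ∫ r in Set.Ioi (0:ℝ), 2 * W' (σ + r^2)
        = (∫ r in Set.Ioi (0:ℝ), 2 * Rline e1 (σ + r^2) ω1 ω2)
          - ∫ r in Set.Ioi (0:ℝ), 2 * Rline d2 (σ + r^2) ω1 ω2 := by
      rw [← integral_sub hint1 hint2]
      congr 1
      funext r
      show 2 * (Rline e1 (σ + r^2) ω1 ω2 - Rline d2 (σ + r^2) ω1 ω2) = _
      ring
    rw [hsub]
    ring
  -- final estimate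
  have hkey := RFD.key_estimate hR1 hWd hWv NW' σ
  have hc0 : 0 < c := by
    rw [hcdef]
    have := Real.pi_pos
    have := Real.sqrt_pos.2 (by norm_num : (0:ℝ) < 2)
    positivity
  have hc1 : c ≤ 1 := by
    rw [hcdef]
    rw [div_le_one (by positivity)]
    have h2 : (1:ℝ) ≤ Real.sqrt 2 := by
      rw [show (1:ℝ) = Real.sqrt 1 by simp]
      exact Real.sqrt_le_sqrt (by norm_num)
    nlinarith [Real.pi_gt_three]
  rw [hdFeq, abs_mul, abs_of_pos hc0]
  calc c * |∫ r in Set.Ioi (0:ℝ), 2 * W' (σ + r^2)|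
      ≤ 1 * |∫ r in Set.Ioi (0:ℝ), 2 * W' (σ + r^2)| :=
        mul_le_mul_of_nonneg_right hc1 (abs_nonneg _)
    _ = |∫ r in Set.Ioi (0:ℝ), 2 * W' (σ + r^2)| := one_mul _
    _ ≤ 400 * (MW+1) * (R+1)^3 * jb σ ^ (-(3:ℝ)/2) := hkey

end
end
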